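/- arXiv:2308.10676 — 2 statements merged into one kernel-verified Lean document; each statement's English description precedes it below -/
import Mathlib

section
/- Let (Σ,P) be a Kelvin–Planck theory and let (Σ_{C1},P_{C1}) and (Σ_{C2},P_{C2}) be thermometric conjunctions of (Σ,P) with two different thermometers (Σ_{Θ1},P_{Θ1}) and (Σ_{Θ2},P_{Θ2}), where Σ, Σ_{Θ1}, Σ_{Θ2} are pairwise disjoint. Suppose the two thermometric conjunctions are Kelvin–Planck compatible, i.e., there exists a Kelvin–Planck theory (Σ_{C3},P_{C3}) with Σ_{C3} = Σ ∪ Σ_{Θ1} ∪ Σ_{Θ2} whose process set essentially contains both P_{C1} and P_{C2}. Then: (i) for states σ', σ ∈ Σ, σ' ≻_{C1} σ if and only if σ' ≻_{C2} σ (where ≻_{Cj} is the hotter-than relation of (Σ_{Cj},P_{Cj})); (ii) if for each j = 1,2 all Clausius–Duhem temperature scales for (Σ_{Cj},P_{Cj}) are positive multiples of a fixed T*_{Cj}, then the restrictions of T*_{C1} and T*_{C2} to Σ differ by a positive multiple. -/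
open Set

noncomputable section

/-- Signed regular Borel measures on `X`, modeled via the Riesz representation
theorem as the weak-star dual of `C(X, ℝ)`. -/
abbrev Meas (X : Type*) [TopologicalSpace X] := WeakDual ℝ C(X, ℝ)

/-- The ambient space containing `V(X) = M°(X) ⊕ M(X)`; membership in the
subspace `M°(X)` of the first component is expressed by `p.1 1 = 0`. -/
abbrev VSp (X : Type*) [TopologicalSpace X] := Meas X × Meas X

/-- The cone of nonnegative measures. -/
def PosMeas (X : Type*) [TopologicalSpace X] : Set (Meas X) :=
  {μ | ∀ f : C(X, ℝ), (∀ x, 0 ≤ f x) → 0 ≤ μ f}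

variable {X : Type*} [TopologicalSpace X]

/-- The Dirac measure at a point, i.e. the evaluation functional. -/
def dirac (x : X) : Meas X :=
  (⟨⟨⟨fun f => f x, fun _ _ => rfl⟩, fun _ _ => rfl⟩,
    continuous_eval_const x⟩ : C(X, ℝ) →L[ℝ] ℝ)

/-- The set of nonnegative multiples of members of `P`. -/
def coneOf (P : Set (VSp X)) : Set (VSp X) :=
  {x | ∃ c : ℝ, 0 ≤ c ∧ ∃ p ∈ P, x = c • p}

/-- `\hat P`, the weak-star closure of the cone generated by `P`. -/
def hatP (P : Set (VSp X)) : Set (VSp X) :=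
  closure (coneOf P)

/-- A thermodynamical theory: processes have change of condition with total mass
zero (i.e. `P ⊆ V(X)`), and `\hat P` is convex. -/
def IsThermoTheory (P : Set (VSp X)) : Prop :=
  (∀ p ∈ P, p.1 (1 : C(X, ℝ)) = 0) ∧ Convex ℝ (hatP P)

/-- A Kelvin–Planck theory: a thermodynamical theory with
`\hat P ∩ ({0} × M₊(X)) = {(0,0)}`. -/
def IsKelvinPlanck (P : Set (VSp X)) : Prop :=
  IsThermoTheory P ∧ hatP P ∩ (({0} : Set (Meas X)) ×ˢ PosMeas X) = {(0, 0)}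

/-- A Clausius–Duhem pair `(η, T)` for the theory `P`: `η` and `T` are continuous,
`T` is strictly positive, and for every continuous `β` equal pointwise to `1/T`
(such a `β` exists, and is unique, by positivity of `T`), the Clausius–Duhem
inequality `∫ η d(Δm) ≥ ∫ (1/T) dq` holds for every process in `P`. -/
def IsCDPair (P : Set (VSp X)) (η T : C(X, ℝ)) : Prop :=
  (∀ x, 0 < T x) ∧
    ∀ β : C(X, ℝ), (∀ x, β x = (T x)⁻¹) → ∀ p ∈ P, p.2 β ≤ p.1 η

/-- A Clausius–Duhem temperature scale. -/
def IsCDTemp (P : Set (VSp X)) (T : C(X, ℝ)) : Prop :=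
  ∃ η : C(X, ℝ), IsCDPair P η T

/-- Two states are of the same hotness: both `(0, δ_a − δ_b)` and `(0, δ_b − δ_a)`
belong to `\hat P`. -/
def SameHotness (P : Set (VSp X)) (a b : X) : Prop :=
  ((0 : Meas X), dirac a - dirac b) ∈ hatP P ∧
    ((0 : Meas X), dirac b - dirac a) ∈ hatP P

/-- The hotness level of a state. -/
def hotnessLevel (P : Set (VSp X)) (a : X) : Set X :=
  {b | SameHotness P a b}

/-- A subset of the state space that is a hotness level. -/
def IsHotnessLevel (P : Set (VSp X)) (h : Set X) : Prop :=
  ∃ a : X, h = hotnessLevel P a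

/-- The (signed) measure `μ` is supported in the set `A`: `μ` annihilates every
continuous function vanishing on `A`. -/
def SuppIn (μ : Meas X) (A : Set X) : Prop :=
  ∀ f : C(X, ℝ), (∀ x ∈ A, f x = 0) → μ f = 0

/-- `\hat Q` contains a passive heat transfer from hotness level `h` to `h'`:
an element `(0, μ − μ')` of `\hat Q` with `μ, μ'` nonnegative, `supp μ ⊆ h`,
`supp μ' ⊆ h'` and `μ(h) = μ'(h') > 0` (the common value being the total mass). -/
def IsPassiveHT (Q : Set (VSp X)) (h h' : Set X) : Prop :=
  ∃ μ μ' : Meas X, μ ∈ PosMeas X ∧ μ' ∈ PosMeas X ∧ SuppIn μ h ∧ SuppIn μ' h' ∧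
    μ (1 : C(X, ℝ)) = μ' (1 : C(X, ℝ)) ∧ 0 < μ (1 : C(X, ℝ)) ∧
    ((0 : Meas X), μ - μ') ∈ hatP Q

/-- Hotness level `h'` is hotter than `h`: the levels are distinct and every
thermodynamical theory whose closed process cone contains `P` together with a
passive heat transfer from `h` to `h'` fails to be a Kelvin–Planck theory. -/
def Hotter (P : Set (VSp X)) (h' h : Set X) : Prop :=
  h' ≠ h ∧ ∀ Pd : Set (VSp X), IsThermoTheory Pd → P ⊆ hatP Pd →
    IsPassiveHT Pd h h' → ¬ IsKelvinPlanck Pd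

/-- State `a` is hotter than state `b`. -/
def HotterState (P : Set (VSp X)) (a b : X) : Prop :=
  Hotter P (hotnessLevel P a) (hotnessLevel P b)

/-- A Carnot element of the theory `P` operating between hotness levels `h'` and
`h`: a reversible cyclic element `(0, μ' − μ)` with `μ', μ` nonzero nonnegative
measures supported in `h'`, `h` respectively. -/
def IsCarnotBetween (P : Set (VSp X)) (h' h : Set X) (p : VSp X) : Prop :=
  p ∈ hatP P ∧ -p ∈ hatP P ∧
    ∃ μ' μ : Meas X, μ' ∈ PosMeas X ∧ μ ∈ PosMeas X ∧ μ' ≠ 0 ∧ μ ≠ 0 ∧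
      SuppIn μ' h' ∧ SuppIn μ h ∧ p = ((0 : Meas X), μ' - μ)

end

noncomputable section

/-- The inclusion of the left summand as a continuous map. -/
def inlCM (X Y : Type*) [TopologicalSpace X] [TopologicalSpace Y] : C(X, X ⊕ Y) :=
  ⟨Sum.inl, continuous_inl⟩

/-- The inclusion of the right summand as a continuous map. -/
def inrCM (X Y : Type*) [TopologicalSpace X] [TopologicalSpace Y] : C(Y, X ⊕ Y) :=
  ⟨Sum.inr, continuous_inr⟩

/-- The continuous indicator function of the left summand of a disjoint union. -/
def charL (X Y : Type*) [TopologicalSpace X] [TopologicalSpace Y] : C(X ⊕ Y, ℝ) :=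
  ⟨Sum.elim (fun _ => (1 : ℝ)) (fun _ => (0 : ℝ)), by continuity⟩

/-- The continuous indicator function of the right summand of a disjoint union. -/
def charR (X Y : Type*) [TopologicalSpace X] [TopologicalSpace Y] : C(X ⊕ Y, ℝ) :=
  ⟨Sum.elim (fun _ => (0 : ℝ)) (fun _ => (1 : ℝ)), by continuity⟩

/-- `P` is essentially contained in `Q` along the embedding `ι`: every process of
`P`, extended by zero outside the range of `ι` (i.e. pushed forward along `ι`),
belongs to `Q`. -/
def EssCont {Z W : Type*} [TopologicalSpace Z] [TopologicalSpace W]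
    (ι : C(Z, W)) (P : Set (VSp Z)) (Q : Set (VSp W)) : Prop :=
  ∀ p ∈ P, ∃ q ∈ Q, ∀ f : C(W, ℝ),
    q.1 f = p.1 (f.comp ι) ∧ q.2 f = p.2 (f.comp ι)

/-- `P₃`, on the disjoint union `X ⊕ Y`, is a conjunction of the theories `P₁`
(on `X`) and `P₂` (on `Y`): it is a thermodynamical theory essentially containing
`P₁` and `P₂`, and every change of condition of `P₃` vanishes on each of `X`, `Y`. -/
def IsConjunction {X Y : Type*} [TopologicalSpace X] [TopologicalSpace Y]
    (P₁ : Set (VSp X)) (P₂ : Set (VSp Y)) (P₃ : Set (VSp (X ⊕ Y))) : Prop :=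
  IsThermoTheory P₃ ∧
    EssCont (inlCM X Y) P₁ P₃ ∧ EssCont (inrCM X Y) P₂ P₃ ∧
    ∀ p ∈ P₃, p.1 (charL X Y) = 0 ∧ p.1 (charR X Y) = 0

/-- State `a` is weakly hotter than state `b` in the theory `P`. -/
def WHotterState {X : Type*} [TopologicalSpace X] (P : Set (VSp X)) (a b : X) : Prop :=
  ¬ SameHotness P a b ∧
    ∃ ν ∈ PosMeas X, ((0 : Meas X), dirac a - dirac b + ν) ∈ hatP P

/-- The hotness levels of the theory `P` are totally ordered by the
hotter-than relation. -/
def TotallyOrderedHotness {X : Type*} [TopologicalSpace X] (P : Set (VSp X)) : Prop :=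
  ∀ a b : X, SameHotness P a b ∨ HotterState P a b ∨ HotterState P b a

/-- `PC`, on `Θ ⊕ X`, is a thermometric conjunction of the thermometer theory `PΘ`
(on `Θ`) and the theory `P` (on `X`): a Kelvin–Planck conjunction in which every
state of `X` is of the same hotness as some state of `Θ`. -/
def IsThermometricConjunction {Θ X : Type*} [TopologicalSpace Θ] [TopologicalSpace X]
    (PΘ : Set (VSp Θ)) (P : Set (VSp X)) (PC : Set (VSp (Θ ⊕ X))) : Prop :=
  IsKelvinPlanck PC ∧ IsConjunction PΘ P PC ∧
    ∀ σ : X, ∃ θ : Θ, SameHotness PC (Sum.inr σ) (Sum.inl θ)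

end

/-- The embedding `Θ₁ ⊕ X → (Θ₁ ⊕ Θ₂) ⊕ X`. -/
def emb₁ (Θ₁ Θ₂ X : Type*) [TopologicalSpace Θ₁] [TopologicalSpace Θ₂]
    [TopologicalSpace X] : C(Θ₁ ⊕ X, (Θ₁ ⊕ Θ₂) ⊕ X) :=
  ⟨Sum.map Sum.inl id, by continuity⟩

/-- The embedding `Θ₂ ⊕ X → (Θ₁ ⊕ Θ₂) ⊕ X`. -/
def emb₂ (Θ₁ Θ₂ X : Type*) [TopologicalSpace Θ₁] [TopologicalSpace Θ₂]
    [TopologicalSpace X] : C(Θ₂ ⊕ X, (Θ₁ ⊕ Θ₂) ⊕ X) :=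
  ⟨Sum.map Sum.inr id, by continuity⟩

namespace ThermoAux

open Filter Topology

variable {X : Type*} [TopologicalSpace X]

theorem isClosed_hatP (P : Set (VSp X)) : IsClosed (hatP P) := isClosed_closure

theorem subset_hatP (P : Set (VSp X)) : P ⊆ hatP P := fun p hp =>
  subset_closure ⟨1, zero_le_one, p, hp, (one_smul ℝ p).symm⟩

theorem smul_mem_coneOf {P : Set (VSp X)} {c : ℝ} (hc : 0 ≤ c) {x} (hx : x ∈ coneOf P) :
    c • x ∈ coneOf P := by
  obtain ⟨c', hc', p, hp, rfl⟩ := hx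
  exact ⟨c * c', mul_nonneg hc hc', p, hp, smul_smul c c' p⟩

theorem smul_mem_hatP {P : Set (VSp X)} {c : ℝ} (hc : 0 ≤ c) {x} (hx : x ∈ hatP P) :
    c • x ∈ hatP P := by
  have hcont : Continuous fun y : VSp X => c • y := continuous_const_smul c
  have h2 := image_closure_subset_closure_image (s := coneOf P) hcont
  have hmem : c • x ∈ (fun y : VSp X => c • y) '' closure (coneOf P) := ⟨x, hx, rfl⟩
  exact closure_mono (by rintro y ⟨z, hz, rfl⟩; exact smul_mem_coneOf hc hz) (h2 hmem)

theorem zero_mem_hatP {P : Set (VSp X)} (hP : P.Nonempty) : (0 : VSp X) ∈ hatP P := by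
  obtain ⟨p, hp⟩ := hP
  exact subset_closure ⟨0, le_refl 0, p, hp, (zero_smul ℝ p).symm⟩

theorem add_mem_hatP {P : Set (VSp X)} (hconv : Convex ℝ (hatP P)) {x y}
    (hx : x ∈ hatP P) (hy : y ∈ hatP P) : x + y ∈ hatP P := by
  have h := hconv hx hy (by norm_num : (0:ℝ) ≤ 1/2) (by norm_num : (0:ℝ) ≤ 1/2)
    (by norm_num : (1:ℝ)/2 + 1/2 = 1)
  have h2 := smul_mem_hatP (by norm_num : (0:ℝ) ≤ 2) h
  rwa [smul_add, smul_smul, smul_smul, (by norm_num : (2:ℝ) * (1/2) = 1), one_smul, one_smul] at h2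

theorem hatP_subset_of_closed {P C : Set (VSp X)} (hC : IsClosed C)
    (hsmul : ∀ c : ℝ, 0 ≤ c → ∀ x ∈ C, c • x ∈ C) (hPC : P ⊆ C) : hatP P ⊆ C := by
  refine closure_minimal ?_ hC
  rintro x ⟨c, hc, p, hp, rfl⟩
  exact hsmul c hc p (hPC hp)

theorem hatP_nonempty_of_mem {P : Set (VSp X)} {x} (hx : x ∈ hatP P) : P.Nonempty := by
  by_contra h
  rw [Set.not_nonempty_iff_eq_empty] at h
  subst h
  have he : coneOf (∅ : Set (VSp X)) = ∅ := by
    ext y; simp [coneOf]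
  rw [hatP, he, closure_empty] at hx
  exact hx

theorem hatP_fst_one {P : Set (VSp X)} (hP : ∀ p ∈ P, p.1 (1 : C(X,ℝ)) = 0) :
    ∀ q ∈ hatP P, q.1 (1 : C(X,ℝ)) = 0 := by
  intro q hq
  refine hatP_subset_of_closed (C := {q : VSp X | q.1 (1:C(X,ℝ)) = 0}) ?_ ?_ hP hq
  · exact isClosed_eq ((WeakDual.eval_continuous (1:C(X,ℝ))).comp continuous_fst) continuous_const
  · intro c hc x hx
    show (c • x).1 1 = 0
    have hx' : x.1 1 = 0 := hx
    show (c • x.1) 1 = 0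
    show c • x.1 1 = 0
    rw [hx', smul_zero]

theorem isClosed_posMeas : IsClosed (PosMeas X) := by
  have : PosMeas X = ⋂ f ∈ {f : C(X,ℝ) | ∀ x, 0 ≤ f x}, {μ : Meas X | 0 ≤ μ f} := by
    ext μ; constructor
    · intro h; exact Set.mem_iInter₂.2 fun f hf => h f hf
    · intro h f hf; exact Set.mem_iInter₂.1 h f hf
  rw [this]
  exact isClosed_biInter fun f _ => isClosed_le continuous_const (WeakDual.eval_continuous f)

theorem zero_mem_posMeas : (0 : Meas X) ∈ PosMeas X := fun _ _ => le_of_eq rfl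

theorem add_mem_posMeas {μ ν : Meas X} (hμ : μ ∈ PosMeas X) (hν : ν ∈ PosMeas X) :
    μ + ν ∈ PosMeas X := by
  intro f hf
  have := add_nonneg (hμ f hf) (hν f hf)
  exact this

theorem smul_mem_posMeas {c : ℝ} (hc : 0 ≤ c) {μ : Meas X} (hμ : μ ∈ PosMeas X) :
    c • μ ∈ PosMeas X := by
  intro f hf
  have := mul_nonneg hc (hμ f hf)
  exact this

@[simp] theorem dirac_apply (x : X) (f : C(X,ℝ)) : dirac x f = f x := rfl

theorem dirac_mem_posMeas (x : X) : dirac x ∈ PosMeas X := fun f hf => hf x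

theorem sameHotness_symm {P : Set (VSp X)} {a b} (h : SameHotness P a b) : SameHotness P b a :=
  ⟨h.2, h.1⟩

theorem pair_add_pair (μ ν : Meas X) :
    ((0 : Meas X), μ) + ((0 : Meas X), ν) = ((0 : Meas X), μ + ν) := by
  rw [Prod.mk_add_mk, add_zero]

theorem sameHotness_chain {P : Set (VSp X)} (hconv : Convex ℝ (hatP P)) {a b c}
    (h1 : SameHotness P a b) (h2 : SameHotness P b c) : SameHotness P a c := by
  constructor
  · have := add_mem_hatP hconv h1.1 h2.1
    rw [pair_add_pair] at this
    have he : dirac a - dirac b + (dirac b - dirac c) = dirac a - dirac c := by abel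
    rwa [he] at this
  · have := add_mem_hatP hconv h2.2 h1.2
    rw [pair_add_pair] at this
    have he : dirac c - dirac b + (dirac b - dirac a) = dirac c - dirac a := by abel
    rwa [he] at this

theorem hotnessLevel_eq_of_same {P : Set (VSp X)} (hconv : Convex ℝ (hatP P)) {a b}
    (h : SameHotness P a b) : hotnessLevel P a = hotnessLevel P b :=
  Set.ext fun c => ⟨fun hc => sameHotness_chain hconv (sameHotness_symm h) hc,
    fun hc => sameHotness_chain hconv h hc⟩

theorem sameHotness_self {P : Set (VSp X)} (h0 : (0 : VSp X) ∈ hatP P) (a : X) :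
    SameHotness P a a := by
  have : ((0 : Meas X), dirac a - dirac a) = (0 : VSp X) := by rw [sub_self]; rfl
  exact ⟨this ▸ h0, this ▸ h0⟩

end ThermoAux
namespace ThermoAux

open Filter Topology

variable {X : Type*} [TopologicalSpace X]

section Mass
variable [CompactSpace X]

theorem posMeas_key {μ : Meas X} (hμ : μ ∈ PosMeas X) (g : C(X,ℝ)) : μ g ≤ μ 1 * ‖g‖ := by
  have hpos : ∀ x, 0 ≤ (‖g‖ • (1:C(X,ℝ)) - g) x := by
    intro x
    simp only [ContinuousMap.sub_apply, ContinuousMap.smul_apply, ContinuousMap.one_apply,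
      smul_eq_mul, mul_one]
    have h1 : |g x| ≤ ‖g‖ := by
      have := ContinuousMap.norm_coe_le_norm g x
      simpa [Real.norm_eq_abs] using this
    have := abs_le.1 h1
    linarith
  have h0 := hμ _ hpos
  rw [map_sub, map_smul, smul_eq_mul] at h0
  linarith

theorem posMeas_abs_le {μ : Meas X} (hμ : μ ∈ PosMeas X) (f : C(X,ℝ)) :
    |μ f| ≤ μ 1 * ‖f‖ := by
  refine abs_le.2 ⟨?_, posMeas_key hμ f⟩
  have := posMeas_key hμ (-f)
  rw [map_neg, norm_neg] at this
  linarith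

omit [CompactSpace X] in
theorem posMeas_mass_nonneg {μ : Meas X} (hμ : μ ∈ PosMeas X) : 0 ≤ μ 1 :=
  hμ 1 fun x => by simp

theorem posMeas_eq_zero_of_mass {μ : Meas X} (hμ : μ ∈ PosMeas X) (h1 : μ 1 = 0) : μ = 0 := by
  apply DFunLike.ext
  intro f
  have := posMeas_abs_le hμ f
  rw [h1, zero_mul] at this
  have h2 := abs_nonneg (μ f)
  have : |μ f| = 0 := le_antisymm this h2
  rw [abs_eq_zero] at this
  exact this

theorem posMeas_mass_pos {μ : Meas X} (hμ : μ ∈ PosMeas X) (hne : μ ≠ 0) : 0 < μ 1 := by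
  rcases lt_or_eq_of_le (posMeas_mass_nonneg hμ) with h | h
  · exact h
  · exact absurd (posMeas_eq_zero_of_mass hμ h.symm) hne

end Mass

/-- The set `K + ℝ₊ • w`. -/
def rayset {V : Type*} [AddCommGroup V] [Module ℝ V] (K : Set V) (w : V) : Set V :=
  {y | ∃ q ∈ K, ∃ t : ℝ, 0 ≤ t ∧ y = q + t • w}

theorem closure_rayset_cases {V : Type*} [AddCommGroup V] [Module ℝ V] [TopologicalSpace V]
    [IsTopologicalAddGroup V] [ContinuousSMul ℝ V]
    {K : Set V} (hKc : IsClosed K) (hKs : ∀ c : ℝ, 0 ≤ c → ∀ x ∈ K, c • x ∈ K)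
    {w x : V} (hx : x ∈ closure (rayset K w)) :
    (∃ t : ℝ, 0 ≤ t ∧ x - t • w ∈ K) ∨ -w ∈ K := by
  obtain ⟨G, hSG, hGx⟩ := mem_closure_iff_ultrafilter.1 hx
  classical
  set S := rayset K w with hS
  have hch : ∀ y : V, y ∈ S → ∃ qt : V × ℝ, qt.1 ∈ K ∧ 0 ≤ qt.2 ∧ y = qt.1 + qt.2 • w := by
    rintro y ⟨q, hq, t, ht, rfl⟩; exact ⟨(q,t), hq, ht, rfl⟩
  choose F hF1 hF2 hF3 using hch
  set T : V → ℝ := fun y => if h : y ∈ S then (F y h).2 else 0 with hT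
  set Q : V → V := fun y => if h : y ∈ S then (F y h).1 else 0 with hQ
  have hTQ : ∀ y ∈ S, Q y ∈ K ∧ 0 ≤ T y ∧ y = Q y + T y • w := by
    intro y hy
    simp only [hT, hQ, dif_pos hy]
    exact ⟨hF1 y hy, hF2 y hy, hF3 y hy⟩
  have hxid : Filter.Tendsto (fun y : V => y) (↑G) (𝓝 x) := hGx
  by_cases hb : ∃ M : ℝ, {y | y ∈ S ∧ T y ≤ M} ∈ G
  · obtain ⟨M, hM⟩ := hb
    left
    have hIcc : {y | T y ∈ Set.Icc 0 M} ∈ G := by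
      filter_upwards [hM] with y hy
      exact ⟨(hTQ y hy.1).2.1, hy.2⟩
    have hle : (↑(G.map T) : Filter ℝ) ≤ 𝓟 (Set.Icc 0 M) := by
      rw [le_principal_iff]
      exact hIcc
    obtain ⟨t, htmem, htconv⟩ := (isCompact_Icc (a := (0:ℝ)) (b := M)).ultrafilter_le_nhds
      (G.map T) hle
    have htT : Filter.Tendsto T (↑G) (𝓝 t) := htconv
    refine ⟨t, htmem.1, ?_⟩
    have h1 : Filter.Tendsto (fun y => T y • w) (↑G) (𝓝 (t • w)) := htT.smul_const w
    have h2 : Filter.Tendsto (fun y : V => y - T y • w) (↑G) (𝓝 (x - t • w)) := hxid.sub h1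
    have hev : ∀ᶠ y in (↑G : Filter V), y - T y • w ∈ K := by
      filter_upwards [hSG] with y hy
      have h3 := hTQ y hy
      have heq0 : Q y + T y • w - T y • w = Q y := add_sub_cancel_right _ _
      rw [← h3.2.2] at heq0
      rw [heq0]; exact h3.1
    exact hKc.mem_of_tendsto h2 hev
  · right
    push_neg at hb
    have hub : ∀ M : ℝ, {y | y ∈ S ∧ M < T y} ∈ G := by
      intro M
      have hc := (Ultrafilter.compl_mem_iff_notMem).2 (hb M)
      filter_upwards [hc, hSG] with y hy hyS
      refine ⟨hyS, ?_⟩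
      simp only [Set.mem_compl_iff, Set.mem_setOf_eq, not_and, not_le] at hy
      exact hy hyS
    have hatTop : Filter.Tendsto T (↑G) atTop := by
      rw [tendsto_atTop]
      intro M
      filter_upwards [hub M] with y hy
      exact le_of_lt hy.2
    have hinv : Filter.Tendsto (fun y => (T y)⁻¹) (↑G) (𝓝 0) := hatTop.inv_tendsto_atTop
    have h1 : Filter.Tendsto (fun y : V => (T y)⁻¹ • y) (↑G) (𝓝 ((0:ℝ) • x)) := hinv.smul hxid
    rw [zero_smul] at h1
    have h2 : Filter.Tendsto (fun y : V => (T y)⁻¹ • y - w) (↑G) (𝓝 (0 - w)) :=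
      h1.sub tendsto_const_nhds
    rw [zero_sub] at h2
    have hev : ∀ᶠ y in (↑G : Filter V), (T y)⁻¹ • y - w ∈ K := by
      filter_upwards [hub 0] with y hy
      obtain ⟨hyS, hT0⟩ := hy
      obtain ⟨hQK, _, hdecomp⟩ := hTQ y hyS
      have heq : (T y)⁻¹ • (Q y + T y • w) - w = (T y)⁻¹ • Q y := by
        rw [smul_add, smul_smul, inv_mul_cancel₀ (ne_of_gt hT0), one_smul]
        exact add_sub_cancel_right _ _
      rw [← hdecomp] at heq
      rw [heq]
      exact hKs _ (inv_nonneg.2 (le_of_lt hT0)) _ hQK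
    exact hKc.mem_of_tendsto h2 hev

end ThermoAux
namespace ThermoAux

open Filter Topology

section Push

variable {Z W : Type*} [TopologicalSpace Z] [TopologicalSpace W]

/-- Precomposition with `ι` as a continuous linear map on spaces of continuous functions. -/
def compCLM (ι : C(Z,W)) : C(W,ℝ) →L[ℝ] C(Z,ℝ) :=
  ⟨⟨⟨fun f => f.comp ι, fun _ _ => rfl⟩, fun _ _ => rfl⟩, ContinuousMap.continuous_precomp ι⟩

/-- Pushforward of a measure along a continuous map. -/
def pushM (ι : C(Z,W)) (μ : Meas Z) : Meas W :=
  (((μ : C(Z,ℝ) →L[ℝ] ℝ).comp (compCLM ι)) : C(W,ℝ) →L[ℝ] ℝ)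

@[simp] theorem pushM_apply (ι : C(Z,W)) (μ : Meas Z) (f : C(W,ℝ)) :
    pushM ι μ f = μ (f.comp ι) := rfl

theorem pushM_continuous (ι : C(Z,W)) : Continuous (pushM ι) :=
  WeakDual.continuous_of_continuous_eval fun f => WeakDual.eval_continuous (f.comp ι)

theorem pushM_add (ι : C(Z,W)) (μ ν : Meas Z) : pushM ι (μ + ν) = pushM ι μ + pushM ι ν :=
  DFunLike.ext _ _ fun _ => rfl

theorem pushM_sub (ι : C(Z,W)) (μ ν : Meas Z) : pushM ι (μ - ν) = pushM ι μ - pushM ι ν :=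
  DFunLike.ext _ _ fun _ => rfl

theorem pushM_smul (ι : C(Z,W)) (c : ℝ) (μ : Meas Z) : pushM ι (c • μ) = c • pushM ι μ :=
  DFunLike.ext _ _ fun _ => rfl

@[simp] theorem pushM_zero (ι : C(Z,W)) : pushM ι (0 : Meas Z) = 0 :=
  DFunLike.ext _ _ fun _ => rfl

@[simp] theorem pushM_dirac (ι : C(Z,W)) (a : Z) : pushM ι (dirac a) = dirac (ι a) :=
  DFunLike.ext _ _ fun _ => rfl

theorem pushM_posMeas (ι : C(Z,W)) {μ : Meas Z} (hμ : μ ∈ PosMeas Z) :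
    pushM ι μ ∈ PosMeas W :=
  fun f hf => hμ (f.comp ι) fun z => hf (ι z)

theorem pushM_eq_zero (ι : C(Z,W)) (hext : ∀ f : C(Z,ℝ), ∃ F : C(W,ℝ), F.comp ι = f)
    {μ : Meas Z} (h : pushM ι μ = 0) : μ = 0 := by
  apply DFunLike.ext
  intro f
  obtain ⟨F, hF⟩ := hext f
  have := DFunLike.congr_fun h F
  rw [pushM_apply, hF] at this
  exact this

/-- Pushforward on the process space. -/
def pushV (ι : C(Z,W)) (p : VSp Z) : VSp W := (pushM ι p.1, pushM ι p.2)

theorem pushV_continuous (ι : C(Z,W)) : Continuous (pushV ι) :=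
  ((pushM_continuous ι).comp continuous_fst).prodMk ((pushM_continuous ι).comp continuous_snd)

theorem pushV_add (ι : C(Z,W)) (p q : VSp Z) : pushV ι (p + q) = pushV ι p + pushV ι q := by
  simp only [pushV, Prod.fst_add, Prod.snd_add, pushM_add]
  rfl

theorem pushV_smul (ι : C(Z,W)) (c : ℝ) (p : VSp Z) : pushV ι (c • p) = c • pushV ι p := by
  simp only [pushV, Prod.smul_fst, Prod.smul_snd, pushM_smul]
  rfl

theorem pushV_pair (ι : C(Z,W)) (μ : Meas Z) :
    pushV ι ((0 : Meas Z), μ) = ((0 : Meas W), pushM ι μ) := by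
  simp only [pushV, pushM_zero]

theorem pushV_dirac_pair (ι : C(Z,W)) (a b : Z) :
    pushV ι ((0 : Meas Z), dirac a - dirac b) =
      ((0 : Meas W), dirac (ι a) - dirac (ι b)) := by
  rw [pushV_pair, pushM_sub, pushM_dirac, pushM_dirac]

theorem essCont_push {ι : C(Z,W)} {P : Set (VSp Z)} {Q : Set (VSp W)}
    (h : EssCont ι P Q) : ∀ p ∈ P, pushV ι p ∈ Q := by
  intro p hp
  obtain ⟨q, hq, hmatch⟩ := h p hp
  have h1 : q = pushV ι p := by
    refine Prod.ext ?_ ?_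
    · exact DFunLike.ext _ _ fun f => (hmatch f).1
    · exact DFunLike.ext _ _ fun f => (hmatch f).2
  rwa [h1] at hq

theorem pushV_hatP {ι : C(Z,W)} {P : Set (VSp Z)} {Q : Set (VSp W)}
    (hPQ : ∀ p ∈ P, pushV ι p ∈ hatP Q) : ∀ x ∈ hatP P, pushV ι x ∈ hatP Q := by
  intro x hx
  have h1 : hatP P ⊆ (pushV ι) ⁻¹' (hatP Q) := by
    refine hatP_subset_of_closed (IsClosed.preimage (pushV_continuous ι) (isClosed_hatP Q))
      ?_ hPQ
    intro c hc y hy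
    show pushV ι (c • y) ∈ hatP Q
    rw [pushV_smul]
    exact smul_mem_hatP hc hy
  exact h1 hx

theorem pushV_sameHotness {ι : C(Z,W)} {P : Set (VSp Z)} {Q : Set (VSp W)}
    (hPQ : ∀ p ∈ P, pushV ι p ∈ hatP Q) {a b : Z} (h : SameHotness P a b) :
    SameHotness Q (ι a) (ι b) := by
  constructor
  · have := pushV_hatP hPQ _ h.1
    rwa [pushV_dirac_pair] at this
  · have := pushV_hatP hPQ _ h.2
    rwa [pushV_dirac_pair] at this

theorem pushV_closure_rayset {ι : C(Z,W)} {P : Set (VSp Z)} {Q : Set (VSp W)}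
    (hPQ : ∀ p ∈ P, pushV ι p ∈ hatP Q) {w : VSp Z} {x}
    (hx : x ∈ closure (rayset (hatP P) w)) :
    pushV ι x ∈ closure (rayset (hatP Q) (pushV ι w)) := by
  have h1 : pushV ι '' closure (rayset (hatP P) w) ⊆
      closure (pushV ι '' rayset (hatP P) w) :=
    image_closure_subset_closure_image (pushV_continuous ι)
  have h2 : pushV ι '' rayset (hatP P) w ⊆ rayset (hatP Q) (pushV ι w) := by
    rintro y ⟨z, ⟨q, hq, t, ht, rfl⟩, rfl⟩
    refine ⟨pushV ι q, pushV_hatP hPQ _ hq, t, ht, ?_⟩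
    rw [pushV_add, pushV_smul]
  exact closure_mono h2 (h1 ⟨x, hx, rfl⟩)

end Push

end ThermoAux
namespace ThermoAux

open Filter Topology

section Repr

variable {X : Type*} [TopologicalSpace X] [CompactSpace X]

instance measLocallyConvex : LocallyConvexSpace ℝ (Meas X) :=
  WeakBilin.locallyConvexSpace (B := topDualPairing ℝ C(X,ℝ))

/-- Every continuous linear functional on the weak-star dual of `C(X,ℝ)` is given by
evaluation at some continuous function. -/
theorem meas_repr (φ : Meas X →L[ℝ] ℝ) : ∃ g : C(X,ℝ), ∀ μ : Meas X, φ μ = μ g := by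
  classical
  have hb := LinearMap.hasBasis_weakBilin (topDualPairing ℝ C(X,ℝ))
  have hmem : φ ⁻¹' (Metric.ball (0:ℝ) 1) ∈ 𝓝 (0 : WeakDual ℝ C(X,ℝ)) := by
    have h0 : φ (0 : WeakDual ℝ C(X,ℝ)) = 0 := map_zero φ
    have := φ.continuous.tendsto (0 : WeakDual ℝ C(X,ℝ))
    rw [h0] at this
    exact this (Metric.ball_mem_nhds 0 one_pos)
  obtain ⟨U, hU, hUsub⟩ := hb.mem_iff.1 hmem
  obtain ⟨s, r, hr, rfl⟩ :=
    (SeminormFamily.basisSets_iff (p := (topDualPairing ℝ C(X,ℝ)).toSeminormFamily)).1 hU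
  let L : s → WeakDual ℝ C(X,ℝ) →ₗ[ℝ] ℝ := fun i =>
    ⟨⟨fun μ => μ (i : C(X,ℝ)), fun _ _ => rfl⟩, fun _ _ => rfl⟩
  have hker : (⨅ i : s, LinearMap.ker (L i)) ≤ LinearMap.ker (φ : WeakDual ℝ C(X,ℝ) →ₗ[ℝ] ℝ) := by
    intro μ hμ
    rw [Submodule.mem_iInf] at hμ
    rw [LinearMap.mem_ker]
    by_contra hne
    have hball : ∀ c : ℝ, c • μ ∈ Seminorm.ball (s.sup ((topDualPairing ℝ C(X,ℝ)).toSeminormFamily)) 0 r := by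
      intro c
      rw [Seminorm.ball_finset_sup_eq_iInter _ _ _ hr]
      refine Set.mem_iInter₂.2 fun f hf => ?_
      have h0 : μ f = 0 := hμ ⟨f, hf⟩
      show ((topDualPairing ℝ C(X,ℝ)).toSeminormFamily f) ((c • μ - 0 : Meas X) : C(X,ℝ) →L[ℝ] ℝ) < r
      rw [sub_zero]
      have hz : ((topDualPairing ℝ C(X,ℝ)).toSeminormFamily f) (c • μ) = 0 := by
        show ‖(c • μ : Meas X) f‖ = 0
        have hcc : (c • μ : Meas X) f = c • μ f := rfl
        rw [hcc, h0, smul_zero, norm_zero]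
      exact lt_of_eq_of_lt hz hr
    have hlt : ∀ c : ℝ, |c * φ μ| < 1 := by
      intro c
      have := hUsub (hball c)
      change dist (φ (c • μ)) 0 < 1 at this
      rw [dist_zero_right] at this
      have hsc : φ (c • μ) = c * φ μ := by rw [map_smul]; rfl
      rwa [hsc, Real.norm_eq_abs] at this
    have h2 := hlt (2 / |φ μ|)
    rw [abs_mul, abs_div, abs_abs, abs_two, div_mul_cancel₀] at h2
    · norm_num at h2
    · exact fun h => hne (abs_eq_zero.1 h)
  have hspan := mem_span_of_iInf_ker_le_ker (L := L)
    (K := (φ : WeakDual ℝ C(X,ℝ) →ₗ[ℝ] ℝ)) hker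
  obtain ⟨cf, hcf⟩ := (Submodule.mem_span_range_iff_exists_fun ℝ).1 hspan
  refine ⟨∑ i : s, cf i • (i : C(X,ℝ)), fun μ => ?_⟩
  have h1 : φ μ = ∑ i : s, cf i • (μ (i : C(X,ℝ))) := by
    have := congrArg (fun ψ : WeakDual ℝ C(X,ℝ) →ₗ[ℝ] ℝ => ψ μ) hcf
    simp only [LinearMap.coe_sum, Finset.sum_apply, LinearMap.smul_apply] at this
    exact this.symm
  rw [h1, map_sum]
  refine Finset.sum_congr rfl fun i _ => ?_
  rw [map_smul]

end Repr

section LLemma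

variable {X : Type*} [TopologicalSpace X] [CompactSpace X]

theorem posMeas_mem_closure_convexHull {μ : Meas X} {A : Set X}
    (hμ : μ ∈ PosMeas X) (hsupp : SuppIn μ A) (hmass : μ (1 : C(X,ℝ)) = 1) :
    μ ∈ closure (convexHull ℝ (dirac '' A)) := by
  by_contra hnot
  obtain ⟨Φ, u, hΦμ, hΦA⟩ := geometric_hahn_banach_point_closed
    ((convex_convexHull ℝ _).closure) isClosed_closure hnot
  obtain ⟨g, hg⟩ := meas_repr Φ
  have hA : ∀ x ∈ A, u < g x := by
    intro x hx
    have := hΦA (dirac x) (subset_closure (subset_convexHull ℝ _ ⟨x, hx, rfl⟩))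
    rwa [hg, dirac_apply] at this
  set h : C(X,ℝ) := (u • (1:C(X,ℝ)) - g) ⊔ 0 with hh
  have hvanish : ∀ x ∈ A, h x = 0 := by
    intro x hx
    have h1 : (u • (1:C(X,ℝ)) - g) x ≤ 0 := by
      simp only [ContinuousMap.sub_apply, ContinuousMap.smul_apply, ContinuousMap.one_apply,
        smul_eq_mul, mul_one]
      linarith [hA x hx]
    have : h x = max ((u • (1:C(X,ℝ)) - g) x) 0 := rfl
    rw [this, max_eq_right h1]
  have hzero := hsupp h hvanish
  have hge : ∀ x, 0 ≤ (h - (u • (1:C(X,ℝ)) - g)) x := by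
    intro x
    have h2 : (u • (1:C(X,ℝ)) - g) x ≤ h x := le_max_left _ _
    exact sub_nonneg.2 h2
  have hpos := hμ _ hge
  rw [map_sub, hzero, map_sub, map_smul, hmass] at hpos
  rw [hg] at hΦμ
  simp only [smul_eq_mul, mul_one] at hpos
  linarith

theorem L_lemma_sub {C : Set (VSp X)} (hCc : IsClosed C) (hCconv : Convex ℝ C)
    (hCs : ∀ c : ℝ, 0 ≤ c → ∀ x ∈ C, c • x ∈ C)
    {A : Set X} {d : X} {μ : Meas X} (hμ : μ ∈ PosMeas X) (hsupp : SuppIn μ A)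
    {m : ℝ} (hm : 0 < m) (hmass : μ (1 : C(X,ℝ)) = m)
    (hA : ∀ x ∈ A, ((0:Meas X), dirac x - dirac d) ∈ C) :
    ((0:Meas X), μ - m • dirac d) ∈ C := by
  set ν : Meas X := m⁻¹ • μ with hν
  have hνpos : ν ∈ PosMeas X := smul_mem_posMeas (inv_nonneg.2 hm.le) hμ
  have hνsupp : SuppIn ν A := by
    intro f hf
    have := hsupp f hf
    show m⁻¹ • μ f = 0
    rw [this, smul_zero]
  have hνmass : ν (1 : C(X,ℝ)) = 1 := by
    show m⁻¹ • μ 1 = 1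
    rw [hmass, smul_eq_mul, inv_mul_cancel₀ (ne_of_gt hm)]
  have hνmem := posMeas_mem_closure_convexHull hνpos hνsupp hνmass
  set D := {lam : Meas X | ((0:Meas X), lam - dirac d) ∈ C} with hD
  have hDc : IsClosed D := by
    have hcont : Continuous fun lam : Meas X => (((0:Meas X), lam - dirac d) : VSp X) :=
      continuous_const.prodMk (continuous_id.sub continuous_const)
    exact hCc.preimage hcont
  have hDconv : Convex ℝ D := by
    intro l1 h1 l2 h2 a b ha hb hab
    show ((0:Meas X), (a • l1 + b • l2) - dirac d) ∈ C
    have key : ((0:Meas X), (a • l1 + b • l2) - dirac d) =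
        a • (((0:Meas X), l1 - dirac d) : VSp X) + b • (((0:Meas X), l2 - dirac d) : VSp X) := by
      have h2' : (a • l1 + b • l2) - dirac d =
          a • (l1 - dirac d) + b • (l2 - dirac d) := by
        have hd : a • dirac d + b • dirac d = dirac d := by rw [← add_smul, hab, one_smul]
        nth_rewrite 1 [← hd]
        rw [smul_sub, smul_sub]
        abel
      rw [Prod.smul_mk, Prod.smul_mk, Prod.mk_add_mk, smul_zero, smul_zero, add_zero, h2']
    rw [key]
    exact hCconv h1 h2 ha hb hab
  have himg : dirac '' A ⊆ D := by
    rintro y ⟨x, hx, rfl⟩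
    exact hA x hx
  have hsub : closure (convexHull ℝ (dirac '' A)) ⊆ D :=
    closure_minimal (convexHull_min himg hDconv) hDc
  have hνD : ((0:Meas X), ν - dirac d) ∈ C := hsub hνmem
  have := hCs m hm.le _ hνD
  have hfinal : m • (((0:Meas X), ν - dirac d) : VSp X) = ((0:Meas X), μ - m • dirac d) := by
    rw [Prod.smul_mk, smul_zero, smul_sub, hν, smul_smul, mul_inv_cancel₀ (ne_of_gt hm), one_smul]
  rwa [hfinal] at this

theorem L_lemma_sub' {C : Set (VSp X)} (hCc : IsClosed C) (hCconv : Convex ℝ C)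
    (hCs : ∀ c : ℝ, 0 ≤ c → ∀ x ∈ C, c • x ∈ C)
    {A : Set X} {d : X} {μ : Meas X} (hμ : μ ∈ PosMeas X) (hsupp : SuppIn μ A)
    {m : ℝ} (hm : 0 < m) (hmass : μ (1 : C(X,ℝ)) = m)
    (hA : ∀ x ∈ A, ((0:Meas X), dirac d - dirac x) ∈ C) :
    ((0:Meas X), m • dirac d - μ) ∈ C := by
  set ν : Meas X := m⁻¹ • μ with hν
  have hνpos : ν ∈ PosMeas X := smul_mem_posMeas (inv_nonneg.2 hm.le) hμ
  have hνsupp : SuppIn ν A := by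
    intro f hf
    have := hsupp f hf
    show m⁻¹ • μ f = 0
    rw [this, smul_zero]
  have hνmass : ν (1 : C(X,ℝ)) = 1 := by
    show m⁻¹ • μ 1 = 1
    rw [hmass, smul_eq_mul, inv_mul_cancel₀ (ne_of_gt hm)]
  have hνmem := posMeas_mem_closure_convexHull hνpos hνsupp hνmass
  set D := {lam : Meas X | ((0:Meas X), dirac d - lam) ∈ C} with hD
  have hDc : IsClosed D := by
    have hcont : Continuous fun lam : Meas X => (((0:Meas X), dirac d - lam) : VSp X) :=
      continuous_const.prodMk (continuous_const.sub continuous_id)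
    exact hCc.preimage hcont
  have hDconv : Convex ℝ D := by
    intro l1 h1 l2 h2 a b ha hb hab
    show ((0:Meas X), dirac d - (a • l1 + b • l2)) ∈ C
    have key : ((0:Meas X), dirac d - (a • l1 + b • l2)) =
        a • (((0:Meas X), dirac d - l1) : VSp X) + b • (((0:Meas X), dirac d - l2) : VSp X) := by
      have h2' : dirac d - (a • l1 + b • l2) =
          a • (dirac d - l1) + b • (dirac d - l2) := by
        have hd : a • dirac d + b • dirac d = dirac d := by rw [← add_smul, hab, one_smul]
        nth_rewrite 1 [← hd]
        rw [smul_sub, smul_sub]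
        abel
      rw [Prod.smul_mk, Prod.smul_mk, Prod.mk_add_mk, smul_zero, smul_zero, add_zero, h2']
    rw [key]
    exact hCconv h1 h2 ha hb hab
  have himg : dirac '' A ⊆ D := by
    rintro y ⟨x, hx, rfl⟩
    exact hA x hx
  have hsub : closure (convexHull ℝ (dirac '' A)) ⊆ D :=
    closure_minimal (convexHull_min himg hDconv) hDc
  have hνD : ((0:Meas X), dirac d - ν) ∈ C := hsub hνmem
  have := hCs m hm.le _ hνD
  have hfinal : m • (((0:Meas X), dirac d - ν) : VSp X) = ((0:Meas X), m • dirac d - μ) := by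
    rw [Prod.smul_mk, smul_zero, smul_sub, hν, smul_smul, mul_inv_cancel₀ (ne_of_gt hm), one_smul]
  rwa [hfinal] at this

end LLemma

end ThermoAux
namespace ThermoAux

open Filter Topology

variable {X : Type*} [TopologicalSpace X]

/-- The canonical test extension for "`c` is hotter than `d`". -/
def CCset (Q : Set (VSp X)) (c d : X) : Set (VSp X) :=
  closure (rayset (hatP Q) ((0 : Meas X), dirac d - dirac c))

/-- `C` contains a Kelvin–Planck-violating element. -/
def BadElt (C : Set (VSp X)) : Prop :=
  ∃ ρ : Meas X, ρ ∈ PosMeas X ∧ ρ ≠ 0 ∧ ((0 : Meas X), ρ) ∈ C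

theorem exists_nonempty_of_level_ne {Q : Set (VSp X)} {c d : X}
    (h : hotnessLevel Q c ≠ hotnessLevel Q d) : Q.Nonempty := by
  have hx : ∃ x, ¬(x ∈ hotnessLevel Q c ↔ x ∈ hotnessLevel Q d) := by
    by_contra h'
    push_neg at h'
    exact h (Set.ext h')
  obtain ⟨x, hx⟩ := hx
  rcases Classical.em (x ∈ hotnessLevel Q c) with hc | hc
  · exact hatP_nonempty_of_mem hc.1
  · have hd : x ∈ hotnessLevel Q d := by
      rcases Classical.em (x ∈ hotnessLevel Q d) with h1 | h1
      · exact h1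
      · exact absurd (iff_of_false hc h1) hx
    exact hatP_nonempty_of_mem hd.1

theorem rayset_convex {Q : Set (VSp X)} (hconv : Convex ℝ (hatP Q)) (w : VSp X) :
    Convex ℝ (rayset (hatP Q) w) := by
  rintro x ⟨q1, hq1, t1, ht1, rfl⟩ y ⟨q2, hq2, t2, ht2, rfl⟩ a b ha hb hab
  refine ⟨a • q1 + b • q2, hconv hq1 hq2 ha hb hab, a * t1 + b * t2,
    add_nonneg (mul_nonneg ha ht1) (mul_nonneg hb ht2), ?_⟩
  rw [smul_add, smul_add, add_smul, smul_smul, smul_smul]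
  abel

theorem coneOf_rayset {Q : Set (VSp X)} (h0 : (0 : VSp X) ∈ hatP Q) (w : VSp X) :
    coneOf (rayset (hatP Q) w) = rayset (hatP Q) w := by
  apply Set.Subset.antisymm
  · rintro x ⟨a, ha, p, ⟨q, hq, t, ht, rfl⟩, rfl⟩
    refine ⟨a • q, smul_mem_hatP ha hq, a * t, mul_nonneg ha ht, ?_⟩
    rw [smul_add, smul_smul]
  · intro x hx
    exact ⟨1, zero_le_one, x, hx, (one_smul ℝ x).symm⟩

theorem hatP_rayset {Q : Set (VSp X)} (h0 : (0 : VSp X) ∈ hatP Q) (w : VSp X) :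
    hatP (rayset (hatP Q) w) = closure (rayset (hatP Q) w) := by
  rw [hatP, coneOf_rayset h0]

theorem mem_rayset_of_hatP {Q : Set (VSp X)} {w x : VSp X} (hx : x ∈ hatP Q) :
    x ∈ rayset (hatP Q) w :=
  ⟨x, hx, 0, le_refl 0, by rw [zero_smul, add_zero]⟩

theorem w_mem_rayset {Q : Set (VSp X)} (h0 : (0 : VSp X) ∈ hatP Q) (w : VSp X) :
    w ∈ rayset (hatP Q) w :=
  ⟨0, h0, 1, zero_le_one, by rw [one_smul, zero_add]⟩

/-- Forward direction of the characterization: if `c` is hotter than `d` then the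
canonical extension contains a Kelvin–Planck violation. -/
theorem hotter_char_mp {Q : Set (VSp X)} (hQ : IsThermoTheory Q) {c d : X}
    (h : HotterState Q c d) :
    BadElt (CCset Q c d) ∧ hotnessLevel Q c ≠ hotnessLevel Q d := by
  obtain ⟨hlev, hall⟩ := h
  refine ⟨?_, hlev⟩
  have hne : Q.Nonempty := exists_nonempty_of_level_ne hlev
  have h0 : (0 : VSp X) ∈ hatP Q := zero_mem_hatP hne
  set w : VSp X := ((0 : Meas X), dirac d - dirac c) with hw
  set S := rayset (hatP Q) w with hS
  have hhatS : hatP S = closure S := hatP_rayset h0 w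
  have hthermoS : IsThermoTheory S := by
    constructor
    · rintro p ⟨q, hq, t, ht, rfl⟩
      have hq1 : q.1 (1 : C(X,ℝ)) = 0 := hatP_fst_one hQ.1 q hq
      have : (q + t • w).1 = q.1 + t • w.1 := rfl
      rw [this]
      have hw1 : (t • w.1) (1 : C(X,ℝ)) = 0 := by
        rw [hw]
        show (t • (0 : Meas X)) 1 = 0
        rw [smul_zero]
        rfl
      show (q.1 + t • w.1) 1 = 0
      show q.1 1 + (t • w.1) 1 = 0
      rw [hq1, hw1, add_zero]
    · rw [hhatS]
      exact (rayset_convex hQ.2 w).closure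
  have hQS : Q ⊆ hatP S := by
    intro q hq
    rw [hhatS]
    exact subset_closure (mem_rayset_of_hatP (subset_hatP Q hq))
  have hpass : IsPassiveHT S (hotnessLevel Q d) (hotnessLevel Q c) := by
    refine ⟨dirac d, dirac c, dirac_mem_posMeas d, dirac_mem_posMeas c, ?_, ?_, ?_, ?_, ?_⟩
    · intro f hf
      exact hf d (sameHotness_self h0 d)
    · intro f hf
      exact hf c (sameHotness_self h0 c)
    · rfl
    · show (0:ℝ) < (1 : C(X,ℝ)) d
      rw [ContinuousMap.one_apply]
      exact one_pos
    · rw [hhatS]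
      exact subset_closure (w_mem_rayset h0 w)
  have hnKP := hall S hthermoS hQS hpass
  rw [IsKelvinPlanck] at hnKP
  push_neg at hnKP
  have hset := hnKP hthermoS
  have hsup : {((0 : Meas X), (0 : Meas X))} ⊆ hatP S ∩ (({0} : Set (Meas X)) ×ˢ PosMeas X) := by
    intro v hv
    rw [Set.mem_singleton_iff] at hv
    subst hv
    refine ⟨?_, ?_⟩
    · rw [hhatS]
      refine subset_closure ?_
      have : (((0:Meas X), (0:Meas X)) : VSp X) = (0 : VSp X) := rfl
      rw [this]
      exact mem_rayset_of_hatP h0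
    · exact ⟨Set.mem_singleton _, zero_mem_posMeas⟩
  have hbad : ∃ v ∈ hatP S ∩ (({0} : Set (Meas X)) ×ˢ PosMeas X),
      v ≠ ((0 : Meas X), (0 : Meas X)) := by
    by_contra hb
    push_neg at hb
    exact hset (Set.Subset.antisymm (fun v hv => hb v hv) hsup)
  obtain ⟨v, ⟨hv1, hv2⟩, hvne⟩ := hbad
  obtain ⟨hv0, hvpos⟩ := hv2
  rw [Set.mem_singleton_iff] at hv0
  refine ⟨v.2, hvpos, ?_, ?_⟩
  · intro hv2z
    apply hvne
    have : v = (v.1, v.2) := rfl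
    rw [this, hv0, hv2z]
  · have : v = ((0 : Meas X), v.2) := by
      rw [← hv0]
    rw [← this]
    show v ∈ closure (rayset (hatP Q) w)
    rw [← hhatS]
    exact hv1

/-- Backward direction of the characterization. -/
theorem hotter_char_mpr [CompactSpace X] {Q : Set (VSp X)} (hQ : IsThermoTheory Q) {c d : X}
    (hlev : hotnessLevel Q c ≠ hotnessLevel Q d) (hbad : BadElt (CCset Q c d)) :
    HotterState Q c d := by
  refine ⟨hlev, ?_⟩
  intro Pd hPd hQPd hpass hKP
  have hsmulPd : ∀ a : ℝ, 0 ≤ a → ∀ x ∈ hatP Pd, a • x ∈ hatP Pd :=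
    fun a ha x hx => smul_mem_hatP ha hx
  have hsub : hatP Q ⊆ hatP Pd :=
    hatP_subset_of_closed (isClosed_hatP Pd) hsmulPd hQPd
  obtain ⟨μ, μ', hμpos, hμ'pos, hμsupp, hμ'supp, hmasses, hmpos, hwmem⟩ := hpass
  set m : ℝ := μ (1 : C(X,ℝ)) with hm
  have h1 : ((0:Meas X), m • dirac d - μ) ∈ hatP Pd := by
    refine L_lemma_sub' (isClosed_hatP Pd) hPd.2 hsmulPd hμpos hμsupp hmpos hm.symm ?_
    intro x hx
    exact hsub hx.1
  have h2 : ((0:Meas X), μ' - m • dirac c) ∈ hatP Pd := by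
    refine L_lemma_sub (isClosed_hatP Pd) hPd.2 hsmulPd hμ'pos hμ'supp
      (hmasses ▸ hmpos) (hmasses.symm) ?_
    intro x hx
    exact hsub hx.2
  have hsum : ((0:Meas X), m • dirac d - m • dirac c) ∈ hatP Pd := by
    have ha := add_mem_hatP hPd.2 (add_mem_hatP hPd.2 h1 hwmem) h2
    rw [pair_add_pair, pair_add_pair] at ha
    have he : m • dirac d - μ + (μ - μ') + (μ' - m • dirac c)
        = m • dirac d - m • dirac c := by abel
    rwa [he] at ha
  have hwm : ((0:Meas X), dirac d - dirac c) ∈ hatP Pd := by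
    have := hsmulPd m⁻¹ (inv_nonneg.2 hmpos.le) _ hsum
    have he : m⁻¹ • (((0:Meas X), m • dirac d - m • dirac c) : VSp X)
        = ((0:Meas X), dirac d - dirac c) := by
      rw [Prod.smul_mk, smul_zero, smul_sub, smul_smul, smul_smul,
        inv_mul_cancel₀ (ne_of_gt hmpos), one_smul, one_smul]
    rwa [he] at this
  have hCC : CCset Q c d ⊆ hatP Pd := by
    refine closure_minimal ?_ (isClosed_hatP Pd)
    rintro x ⟨q, hq, t, ht, rfl⟩
    exact add_mem_hatP hPd.2 (hsub hq) (hsmulPd t ht _ hwm)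
  obtain ⟨ρ, hρpos, hρne, hρmem⟩ := hbad
  have hμmem : ((0:Meas X), ρ) ∈ hatP Pd ∩ (({0} : Set (Meas X)) ×ˢ PosMeas X) :=
    ⟨hCC hρmem, Set.mem_singleton _, hρpos⟩
  rw [hKP.2] at hμmem
  rw [Set.mem_singleton_iff, Prod.ext_iff] at hμmem
  exact hρne hμmem.2

end ThermoAux
namespace ThermoAux

open Filter Topology

section Transfer

theorem kp_no_bad {W : Type*} [TopologicalSpace W] {P : Set (VSp W)} (hKP : IsKelvinPlanck P)
    {ρ : Meas W} (hρ : ρ ∈ PosMeas W) (hne : ρ ≠ 0) (hmem : ((0:Meas W), ρ) ∈ hatP P) :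
    False := by
  have h : ((0:Meas W), ρ) ∈ hatP P ∩ (({0} : Set (Meas W)) ×ˢ PosMeas W) :=
    ⟨hmem, Set.mem_singleton _, hρ⟩
  rw [hKP.2, Set.mem_singleton_iff, Prod.ext_iff] at h
  exact hne h.2

theorem badElt_no_absorb {W : Type*} [TopologicalSpace W] {P : Set (VSp W)}
    (hKP : IsKelvinPlanck P) {w : VSp W}
    (hbad : BadElt (closure (rayset (hatP P) w))) (hmem : w ∈ hatP P) : False := by
  obtain ⟨ρ, hpos, hne, hρ⟩ := hbad
  have hsub : closure (rayset (hatP P) w) ⊆ hatP P := by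
    refine closure_minimal ?_ (isClosed_hatP P)
    rintro x ⟨q, hq, t, ht, rfl⟩
    exact add_mem_hatP hKP.1.2 hq (smul_mem_hatP ht hmem)
  exact kp_no_bad hKP hpos hne (hsub hρ)

theorem rayset_shift {X : Type*} [TopologicalSpace X] {Q : Set (VSp X)}
    (hconv : Convex ℝ (hatP Q)) {w u₁ u₂ r : VSp X}
    (hu₁ : u₁ ∈ hatP Q) (hu₂ : u₂ ∈ hatP Q) (hw : w = u₁ + r + u₂) :
    rayset (hatP Q) w ⊆ rayset (hatP Q) r := by
  rintro x ⟨q, hq, t, ht, rfl⟩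
  refine ⟨q + t • u₁ + t • u₂,
    add_mem_hatP hconv (add_mem_hatP hconv hq (smul_mem_hatP ht hu₁)) (smul_mem_hatP ht hu₂),
    t, ht, ?_⟩
  rw [hw, smul_add, smul_add]
  abel

theorem badElt_mono {X : Type*} [TopologicalSpace X] {A B : Set (VSp X)}
    (h : A ⊆ B) (hbad : BadElt A) : BadElt B := by
  obtain ⟨ρ, h1, h2, h3⟩ := hbad
  exact ⟨ρ, h1, h2, h h3⟩

theorem badElt_push {Z W' : Type*} [TopologicalSpace Z] [TopologicalSpace W'] {ι : C(Z,W')}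
    {P : Set (VSp Z)} {Q : Set (VSp W')} (hPQ : ∀ p ∈ P, pushV ι p ∈ hatP Q)
    (hext : ∀ f : C(Z,ℝ), ∃ F : C(W',ℝ), F.comp ι = f)
    {w : VSp Z} (h : BadElt (closure (rayset (hatP P) w))) :
    BadElt (closure (rayset (hatP Q) (pushV ι w))) := by
  obtain ⟨ρ, hpos, hne, hmem⟩ := h
  refine ⟨pushM ι ρ, pushM_posMeas ι hpos, fun h0 => hne (pushM_eq_zero ι hext h0), ?_⟩
  have h2 := pushV_closure_rayset hPQ hmem
  rwa [pushV_pair] at h2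

theorem pushV_comp {Z Y W' : Type*} [TopologicalSpace Z] [TopologicalSpace Y]
    [TopologicalSpace W'] (ι : C(Z,Y)) (j : C(Y,W')) (p : VSp Z) :
    pushV (j.comp ι) p = pushV j (pushV ι p) := by
  refine Prod.ext ?_ ?_ <;> exact DFunLike.ext _ _ fun f => rfl

set_option maxHeartbeats 1000000 in
/-- The key transfer: hotter-than in one thermometric conjunction implies
hotter-than in the other, given a Kelvin–Planck compatible joint theory. -/
theorem hotter_transfer
    {Θ₂ X W : Type*} {ΞA : Type*}
    [TopologicalSpace ΞA]
    [TopologicalSpace Θ₂] [CompactSpace Θ₂]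
    [TopologicalSpace X] [CompactSpace X]
    [TopologicalSpace W] [CompactSpace W]
    {PΘ2 : Set (VSp Θ₂)} (hTΘ2 : IsThermoTheory PΘ2) (hord2 : TotallyOrderedHotness PΘ2)
    {P : Set (VSp X)}
    {PC1 : Set (VSp ΞA)} (hT1 : IsThermoTheory PC1)
    {PC2 : Set (VSp (Θ₂ ⊕ X))}
    (hKP2 : IsKelvinPlanck PC2)
    (hconj2 : IsConjunction PΘ2 P PC2)
    (hth2 : ∀ σ : X, ∃ θ : Θ₂, SameHotness PC2 (Sum.inr σ) (Sum.inl θ))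
    {PC3 : Set (VSp W)} (hKP3 : IsKelvinPlanck PC3)
    {j₁ : C(ΞA, W)} {j₂ : C(Θ₂ ⊕ X, W)}
    {e : X → ΞA}
    (hj : ∀ x : X, j₁ (e x) = j₂ (Sum.inr x))
    (hE1 : EssCont j₁ PC1 PC3) (hE2 : EssCont j₂ PC2 PC3)
    (hext1 : ∀ f : C(ΞA, ℝ), ∃ F : C(W,ℝ), F.comp j₁ = f)
    (hext2 : ∀ f : C(Θ₂ ⊕ X, ℝ), ∃ F : C(W,ℝ), F.comp j₂ = f)
    {a b : X} (hH1 : HotterState PC1 (e a) (e b)) :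
    HotterState PC2 (Sum.inr a) (Sum.inr b) := by
  classical
  have hconv3 : Convex ℝ (hatP PC3) := hKP3.1.2
  -- pushforward maps
  have hpush1 : ∀ p ∈ PC1, pushV j₁ p ∈ hatP PC3 :=
    fun p hp => subset_hatP _ (essCont_push hE1 p hp)
  have hpush2 : ∀ p ∈ PC2, pushV j₂ p ∈ hatP PC3 :=
    fun p hp => subset_hatP _ (essCont_push hE2 p hp)
  set ι₂ : C(Θ₂, W) := j₂.comp (inlCM Θ₂ X) with hι₂
  have hpushΘ : ∀ p ∈ PΘ2, pushV ι₂ p ∈ hatP PC3 := by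
    intro p hp
    rw [hι₂, pushV_comp]
    exact subset_hatP _ (essCont_push hE2 _ (essCont_push hconj2.2.1 p hp))
  have hextΘ : ∀ f : C(Θ₂, ℝ), ∃ F : C(W,ℝ), F.comp ι₂ = f := by
    intro f
    obtain ⟨F, hF⟩ := hext2 ⟨Sum.elim f 0, (map_continuous f).sumElim continuous_const⟩
    refine ⟨F, ContinuousMap.ext fun z => ?_⟩
    have := ContinuousMap.congr_fun hF (Sum.inl z)
    exact this
  -- notation
  set at' : W := j₂ (Sum.inr a) with hat'
  set bt : W := j₂ (Sum.inr b) with hbt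
  set r : VSp W := ((0 : Meas W), dirac at' - dirac bt) with hr
  -- F1 : bad element upstairs
  obtain ⟨hbad1, _⟩ := hotter_char_mp hT1 hH1
  have hbad3 : BadElt (closure (rayset (hatP PC3) (-r))) := by
    have h := badElt_push hpush1 hext1 hbad1
    have heq : pushV j₁ ((0 : Meas ΞA), dirac (e b) - dirac (e a)) = -r := by
      rw [pushV_dirac_pair, hj, hj, hr]
      refine Prod.ext ?_ ?_
      · show (0 : Meas W) = -(0 : Meas W)
        rw [neg_zero]
      · show dirac bt - dirac at' = -(dirac at' - dirac bt)
        rw [neg_sub]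
    rwa [heq] at h
  -- F2
  have hF2 : ((0:Meas W), dirac bt - dirac at') ∉ hatP PC3 := by
    intro hmem
    have hmem' : -r ∈ hatP PC3 := by
      have : -r = ((0:Meas W), dirac bt - dirac at') := by
        rw [hr]
        refine Prod.ext ?_ ?_
        · show -(0 : Meas W) = (0 : Meas W)
          rw [neg_zero]
        · show -(dirac at' - dirac bt) = dirac bt - dirac at'
          rw [neg_sub]
      rw [this]
      exact hmem
    exact badElt_no_absorb hKP3 hbad3 hmem'
  -- thermometer states
  obtain ⟨θ₂, hθ₂⟩ := hth2 a
  obtain ⟨θ₂', hθ₂'⟩ := hth2 b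
  set ct : W := j₂ (Sum.inl θ₂) with hct
  set dt : W := j₂ (Sum.inl θ₂') with hdt
  have hS3a : SameHotness PC3 at' ct := pushV_sameHotness hpush2 hθ₂
  have hS3b : SameHotness PC3 bt dt := pushV_sameHotness hpush2 hθ₂'
  -- F4
  have hF4 : ¬ SameHotness PΘ2 θ₂ θ₂' := by
    intro hsame
    have h1 : SameHotness PC3 ct dt := pushV_sameHotness hpushΘ hsame
    have h2 : SameHotness PC3 at' bt :=
      sameHotness_chain hconv3 (sameHotness_chain hconv3 hS3a h1) (sameHotness_symm hS3b)
    exact hF2 h2.2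
  -- F5
  have hF5 : ¬ HotterState PΘ2 θ₂' θ₂ := by
    intro hH'
    obtain ⟨hbadΘ, _⟩ := hotter_char_mp hTΘ2 hH'
    have hbadE0 : BadElt (closure (rayset (hatP PC3) ((0:Meas W), dirac ct - dirac dt))) := by
      have h := badElt_push hpushΘ hextΘ hbadΘ
      have heq : pushV ι₂ ((0 : Meas Θ₂), dirac θ₂ - dirac θ₂')
          = ((0:Meas W), dirac ct - dirac dt) := by
        rw [pushV_dirac_pair]
        rfl
      rwa [heq] at h
    -- shift the ray to r
    have hshift : rayset (hatP PC3) ((0:Meas W), dirac ct - dirac dt)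
        ⊆ rayset (hatP PC3) r := by
      refine rayset_shift hconv3 (u₁ := ((0:Meas W), dirac ct - dirac at'))
        (u₂ := ((0:Meas W), dirac bt - dirac dt)) hS3a.2 hS3b.1 ?_
      rw [hr, pair_add_pair, pair_add_pair]
      refine congrArg _ ?_
      abel
    have hbadE : BadElt (closure (rayset (hatP PC3) r)) :=
      badElt_mono (closure_mono hshift) hbadE0
    -- net lemma twice
    have hsmul3 : ∀ c : ℝ, 0 ≤ c → ∀ x ∈ hatP PC3, c • x ∈ hatP PC3 :=
      fun c hc x hx => smul_mem_hatP hc hx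
    obtain ⟨σ, hσpos, hσne, hσmem⟩ := hbadE
    obtain ⟨ρ, hρpos, hρne, hρmem⟩ := hbad3
    have hcase1 := closure_rayset_cases (isClosed_hatP PC3) hsmul3 hσmem
    have hcase2 := closure_rayset_cases (isClosed_hatP PC3) hsmul3 hρmem
    rcases hcase1 with ⟨t, ht, hmem1⟩ | habs1
    · rcases hcase2 with ⟨s, hs, hmem2⟩ | habs2
      · -- combine
        have hx : ((0:Meas W), ρ) + s • r ∈ hatP PC3 := by
          have : ((0:Meas W), ρ) - s • (-r) = ((0:Meas W), ρ) + s • r := by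
            rw [smul_neg, sub_neg_eq_add]
          rwa [this] at hmem2
        have hy : ((0:Meas W), σ) - t • r ∈ hatP PC3 := hmem1
        have hcomb : ((0:Meas W), t • ρ + s • σ) ∈ hatP PC3 := by
          have h1 := add_mem_hatP hconv3 (smul_mem_hatP ht hx) (smul_mem_hatP hs hy)
          have heq : t • (((0:Meas W), ρ) + s • r) + s • (((0:Meas W), σ) - t • r)
              = ((0:Meas W), t • ρ + s • σ) := by
            have hpair : (((0:Meas W), t • ρ + s • σ) : VSp W)
                = t • (((0:Meas W), ρ) : VSp W) + s • (((0:Meas W), σ) : VSp W) := by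
              rw [Prod.smul_mk, Prod.smul_mk, smul_zero, smul_zero, pair_add_pair]
            rw [hpair]
            module
          rwa [heq] at h1
        -- the combination is positive and nonzero unless t = s = 0
        rcases eq_or_lt_of_le ht with ht0 | htpos
        · -- t = 0 : σ itself in hatP PC3
          have : ((0:Meas W), σ) ∈ hatP PC3 := by
            have h0 : ((0:Meas W), σ) - (0:ℝ) • r = ((0:Meas W), σ) := by
              rw [zero_smul, sub_zero]
            rw [← ht0] at hmem1
            rwa [h0] at hmem1
          exact kp_no_bad hKP3 hσpos hσne this
        · have hcpos : t • ρ + s • σ ∈ PosMeas W :=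
            add_mem_posMeas (smul_mem_posMeas htpos.le hρpos) (smul_mem_posMeas hs hσpos)
          have hcne : t • ρ + s • σ ≠ 0 := by
            intro h0
            have hmass : (t • ρ + s • σ) (1 : C(W,ℝ)) = 0 := by rw [h0]; rfl
            have hmass1 : (t • ρ + s • σ) (1 : C(W,ℝ))
                = t * ρ (1 : C(W,ℝ)) + s * σ (1 : C(W,ℝ)) := rfl
            have hρ1 := posMeas_mass_pos hρpos hρne
            have hσ1 := posMeas_mass_nonneg hσpos
            nlinarith
          exact kp_no_bad hKP3 hcpos hcne hcomb
      · -- -(-r) = r ∈ hatP PC3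
        have hrmem : r ∈ hatP PC3 := by
          have : -(-r) = r := neg_neg r
          rwa [this] at habs2
        have : ((0:Meas W), σ) ∈ hatP PC3 := by
          have h1 := add_mem_hatP hconv3 hmem1 (smul_mem_hatP ht hrmem)
          have heq : ((0:Meas W), σ) - t • r + t • r = ((0:Meas W), σ) := by
            rw [sub_add_cancel]
          rwa [heq] at h1
        exact kp_no_bad hKP3 hσpos hσne this
    · -- -r ∈ hatP PC3 contradicts F2
      apply hF2
      have : -r = ((0:Meas W), dirac bt - dirac at') := by
        rw [hr]
        refine Prod.ext ?_ ?_
        · show -(0 : Meas W) = (0 : Meas W)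
          rw [neg_zero]
        · show -(dirac at' - dirac bt) = dirac bt - dirac at'
          rw [neg_sub]
      rwa [this] at habs1
  -- F6 : trichotomy
  have hHθ : HotterState PΘ2 θ₂ θ₂' := by
    rcases hord2 θ₂ θ₂' with hsame | hh | hh
    · exact absurd hsame hF4
    · exact hh
    · exact absurd hh hF5
  -- F7, F8 : push down to PC2
  obtain ⟨hbadθ, _⟩ := hotter_char_mp hTΘ2 hHθ
  have hpushΘ2 : ∀ p ∈ PΘ2, pushV (inlCM Θ₂ X) p ∈ hatP PC2 :=
    fun p hp => subset_hatP _ (essCont_push hconj2.2.1 p hp)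
  have hextΘ2 : ∀ f : C(Θ₂, ℝ), ∃ F : C(Θ₂ ⊕ X,ℝ), F.comp (inlCM Θ₂ X) = f := by
    intro f
    exact ⟨⟨Sum.elim f 0, (map_continuous f).sumElim continuous_const⟩,
      ContinuousMap.ext fun z => rfl⟩
  have hbad2' : BadElt (closure (rayset (hatP PC2)
      ((0 : Meas (Θ₂ ⊕ X)), dirac (Sum.inl θ₂') - dirac (Sum.inl θ₂)))) := by
    have h := badElt_push hpushΘ2 hextΘ2 hbadθ
    have heq : pushV (inlCM Θ₂ X) ((0 : Meas Θ₂), dirac θ₂' - dirac θ₂)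
        = ((0 : Meas (Θ₂ ⊕ X)), dirac (Sum.inl θ₂') - dirac (Sum.inl θ₂)) := by
      rw [pushV_dirac_pair]
      rfl
    rwa [heq] at h
  have hconv2 : Convex ℝ (hatP PC2) := hKP2.1.2
  have hbad2 : BadElt (CCset PC2 (Sum.inr a) (Sum.inr b)) := by
    refine badElt_mono (closure_mono ?_) hbad2'
    refine rayset_shift hconv2
      (u₁ := ((0:Meas (Θ₂ ⊕ X)), dirac (Sum.inl θ₂') - dirac (Sum.inr b)))
      (u₂ := ((0:Meas (Θ₂ ⊕ X)), dirac (Sum.inr a) - dirac (Sum.inl θ₂)))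
      hθ₂'.2 hθ₂.1 ?_
    rw [pair_add_pair, pair_add_pair]
    refine congrArg _ ?_
    abel
  -- F9 : levels distinct
  have hPC2ne : PC2.Nonempty := hatP_nonempty_of_mem hθ₂.1
  have h02 : (0 : VSp (Θ₂ ⊕ X)) ∈ hatP PC2 := zero_mem_hatP hPC2ne
  have hnsame : ¬ SameHotness PC2 (Sum.inr a) (Sum.inr b) := by
    intro hsame
    exact badElt_no_absorb hKP2 hbad2 hsame.2
  have hlev : hotnessLevel PC2 (Sum.inr a) ≠ hotnessLevel PC2 (Sum.inr b) := by
    intro heq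
    apply hnsame
    have hself : Sum.inr b ∈ hotnessLevel PC2 (Sum.inr b) := sameHotness_self h02 _
    rw [← heq] at hself
    exact hself
  -- F10
  exact hotter_char_mpr hKP2.1 hlev hbad2

end Transfer

end ThermoAux
namespace ThermoAux

open Filter Topology

section CD

variable {W : Type*} [TopologicalSpace W] [CompactSpace W]

/-- Existence of a Clausius–Duhem pair for a Kelvin–Planck theory, by the
Hahn–Banach separation theorem. -/
theorem kp_exists_cd {P : Set (VSp W)} (hKP : IsKelvinPlanck P) :
    ∃ (η β : C(W,ℝ)), (∀ x, 0 < β x) ∧ ∀ q ∈ hatP P, q.2 β ≤ q.1 η := by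
  classical
  set B₀ : Set (Meas W) := {μ | μ ∈ PosMeas W ∧ μ (1:C(W,ℝ)) = 1} with hB₀
  have hB₀closed : IsClosed B₀ :=
    isClosed_posMeas.inter (isClosed_eq (WeakDual.eval_continuous 1) continuous_const)
  have hB₀sub : B₀ ⊆ WeakDual.toStrongDual ⁻¹' Metric.closedBall 0 1 := by
    intro μ hμ
    rw [Set.mem_preimage, Metric.mem_closedBall]
    refine (dist_zero_right (WeakDual.toStrongDual μ : C(W,ℝ) →L[ℝ] ℝ)).trans_le ?_
    refine ContinuousLinearMap.opNorm_le_bound _ zero_le_one ?_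
    intro f
    have h1 := posMeas_abs_le hμ.1 f
    rw [hμ.2, one_mul] at h1
    rw [Real.norm_eq_abs]
    show |μ f| ≤ 1 * ‖f‖
    calc |μ f| ≤ ‖f‖ := h1
    _ = 1 * ‖f‖ := (one_mul _).symm
  have hB₀cpt : IsCompact B₀ :=
    (WeakDual.isCompact_closedBall (𝕜 := ℝ) (E := C(W,ℝ)) 0 1).of_isClosed_subset hB₀closed hB₀sub
  have hB₀conv : Convex ℝ B₀ := by
    intro x hx y hy a b ha hb hab
    refine ⟨add_mem_posMeas (smul_mem_posMeas ha hx.1) (smul_mem_posMeas hb hy.1), ?_⟩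
    have : (a • x + b • y) (1:C(W,ℝ)) = a * x 1 + b * y 1 := rfl
    rw [this, hx.2, hy.2, mul_one, mul_one, hab]
  set B : Set (VSp W) := ({0} : Set (Meas W)) ×ˢ B₀ with hB
  have hBcpt : IsCompact B := isCompact_singleton.prod hB₀cpt
  have hBconv : Convex ℝ B := (convex_singleton 0).prod hB₀conv
  set Cs : Set (VSp W) := hatP P ∪ {0} with hCs
  have hCclosed : IsClosed Cs := (isClosed_hatP P).union isClosed_singleton
  have hCconv : Convex ℝ Cs := by
    intro x hx y hy a b ha hb hab
    rcases hx with hx | hx <;> rcases hy with hy | hy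
    · exact Or.inl (hKP.1.2 hx hy ha hb hab)
    · rw [Set.mem_singleton_iff] at hy
      subst hy
      simp only [smul_zero, add_zero]
      exact Or.inl (smul_mem_hatP ha hx)
    · rw [Set.mem_singleton_iff] at hx
      subst hx
      simp only [smul_zero, zero_add]
      exact Or.inl (smul_mem_hatP hb hy)
    · rw [Set.mem_singleton_iff] at hx hy
      subst hx; subst hy
      simp only [smul_zero, add_zero]
      exact Or.inr rfl
  have hdisj : Disjoint Cs B := by
    rw [Set.disjoint_left]
    intro x hx hxB
    obtain ⟨hx1, hx2⟩ := hxB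
    rw [Set.mem_singleton_iff] at hx1
    rcases hx with hx | hx
    · have hxmem : x ∈ hatP P ∩ (({0} : Set (Meas W)) ×ˢ PosMeas W) :=
        ⟨hx, by rw [hx1]; exact Set.mem_singleton _, hx2.1⟩
      rw [hKP.2, Set.mem_singleton_iff] at hxmem
      have : x.2 (1 : C(W,ℝ)) = 1 := hx2.2
      rw [hxmem] at this
      have h00 : (0 : Meas W) (1:C(W,ℝ)) = 0 := rfl
      exact zero_ne_one (h00.symm.trans this)
    · rw [Set.mem_singleton_iff] at hx
      have : x.2 (1 : C(W,ℝ)) = 1 := hx2.2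
      rw [hx] at this
      have h00 : (0 : Meas W) (1:C(W,ℝ)) = 0 := rfl
      exact zero_ne_one (h00.symm.trans this)
  obtain ⟨Φ, u, v, hΦC, huv, hΦB⟩ :=
    geometric_hahn_banach_closed_compact hCconv hCclosed hBconv hBcpt hdisj
  have hu0 : 0 < u := by
    have h0 := hΦC 0 (Or.inr rfl)
    rwa [map_zero] at h0
  have hΦle : ∀ q ∈ hatP P, Φ q ≤ 0 := by
    intro q hq
    by_contra hpos
    push_neg at hpos
    have hs : (0:ℝ) ≤ (u + 1) / Φ q := div_nonneg (by linarith) hpos.le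
    have hmem := hΦC (((u + 1) / Φ q) • q) (Or.inl (smul_mem_hatP hs hq))
    rw [map_smul, smul_eq_mul, div_mul_cancel₀ _ (ne_of_gt hpos)] at hmem
    linarith
  set Φ₁ : Meas W →L[ℝ] ℝ := Φ.comp (ContinuousLinearMap.inl ℝ (Meas W) (Meas W)) with hΦ₁
  set Φ₂ : Meas W →L[ℝ] ℝ := Φ.comp (ContinuousLinearMap.inr ℝ (Meas W) (Meas W)) with hΦ₂
  obtain ⟨η', hη⟩ := meas_repr Φ₁
  obtain ⟨β, hβ⟩ := meas_repr Φ₂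
  have key : ∀ x y : Meas W, Φ (x, y) = x η' + y β := by
    intro x y
    have h2 : ((x, y) : VSp W) = (x, 0) + (0, y) := by
      rw [Prod.mk_add_mk, add_zero, zero_add]
    rw [h2, map_add]
    have e1 : Φ ((x, (0:Meas W)) : VSp W) = x η' := by rw [← hη]; rfl
    have e2 : Φ (((0:Meas W), y) : VSp W) = y β := by rw [← hβ]; rfl
    rw [e1, e2]
  have hβpos : ∀ x : W, 0 < β x := by
    intro x
    have hd : (((0:Meas W), dirac x) : VSp W) ∈ B := by
      refine ⟨Set.mem_singleton _, dirac_mem_posMeas x, ?_⟩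
      show (1 : C(W,ℝ)) x = 1
      rw [ContinuousMap.one_apply]
    have hv := hΦB _ hd
    rw [key] at hv
    have h0 : ((0:Meas W)) η' = 0 := rfl
    rw [h0, zero_add, dirac_apply] at hv
    linarith
  refine ⟨-η', β, hβpos, ?_⟩
  intro q hq
  have hle := hΦle q hq
  have hkey := key q.1 q.2
  rw [Prod.mk.eta] at hkey
  rw [hkey] at hle
  have hneg : q.1 (-η') = -(q.1 η') := map_neg q.1 η'
  linarith

end CD

section CDTemp

variable {Z W : Type*} [TopologicalSpace Z] [TopologicalSpace W] [CompactSpace W]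

/-- Transfer of a Clausius–Duhem pair along an essential containment. -/
theorem cd_temp_of_compat {PC : Set (VSp Z)} {PC3 : Set (VSp W)} {j : C(Z,W)}
    (hE : EssCont j PC PC3)
    {η β : C(W,ℝ)} (hβpos : ∀ x, 0 < β x)
    (hCD : ∀ q ∈ hatP PC3, q.2 β ≤ q.1 η) :
    IsCDTemp PC ⟨fun z => (β (j z))⁻¹,
      (((map_continuous β).comp (map_continuous j)).inv₀
        (fun z => ne_of_gt (hβpos (j z))))⟩ := by
  refine ⟨η.comp j, fun z => inv_pos.2 (hβpos (j z)), ?_⟩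
  intro β' hβ' p hp
  have hβ'eq : β' = β.comp j := by
    refine ContinuousMap.ext fun z => ?_
    have := hβ' z
    rw [this]
    show ((β (j z))⁻¹)⁻¹ = (β.comp j) z
    rw [inv_inv]
    rfl
  have hq : pushV j p ∈ hatP PC3 := subset_hatP _ (essCont_push hE p hp)
  have h1 := hCD _ hq
  have h2 : (pushV j p).2 β = p.2 (β.comp j) := rfl
  have h3 : (pushV j p).1 η = p.1 (η.comp j) := rfl
  rw [h2, h3] at h1
  rwa [hβ'eq]

end CDTemp

end ThermoAux
namespace ThermoAux

theorem ext_embL {Θ₁ Θ₂ X : Type*} [TopologicalSpace Θ₁] [TopologicalSpace Θ₂]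
    [TopologicalSpace X] :
    ∀ f : C(Θ₁ ⊕ X, ℝ), ∃ F : C((Θ₁ ⊕ Θ₂) ⊕ X, ℝ), F.comp (emb₁ Θ₁ Θ₂ X) = f := by
  intro f
  refine ⟨⟨Sum.elim (Sum.elim (fun θ => f (Sum.inl θ)) (fun _ => 0))
    (fun x => f (Sum.inr x)), ?_⟩, ?_⟩
  · exact (((map_continuous f).comp continuous_inl).sumElim continuous_const).sumElim
      ((map_continuous f).comp continuous_inr)
  · exact ContinuousMap.ext fun z => by cases z <;> rfl

theorem ext_embR {Θ₁ Θ₂ X : Type*} [TopologicalSpace Θ₁] [TopologicalSpace Θ₂]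
    [TopologicalSpace X] :
    ∀ f : C(Θ₂ ⊕ X, ℝ), ∃ F : C((Θ₁ ⊕ Θ₂) ⊕ X, ℝ), F.comp (emb₂ Θ₁ Θ₂ X) = f := by
  intro f
  refine ⟨⟨Sum.elim (Sum.elim (fun _ => 0) (fun θ => f (Sum.inl θ)))
    (fun x => f (Sum.inr x)), ?_⟩, ?_⟩
  · exact ((continuous_const).sumElim ((map_continuous f).comp continuous_inl)).sumElim
      ((map_continuous f).comp continuous_inr)
  · exact ContinuousMap.ext fun z => by cases z <;> rfl

end ThermoAux

/-- **Theorem (Consistency of Thermometers).** Let `(X, P)` be a Kelvin–Planck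
theory with thermometric conjunctions `PC1` (on `Θ₁ ⊕ X`) and `PC2` (on `Θ₂ ⊕ X`)
corresponding to two thermometers `(Θ₁, PΘ1)` and `(Θ₂, PΘ2)`.  If the two
conjunctions are Kelvin–Planck compatible — some Kelvin–Planck theory on
`(Θ₁ ⊕ Θ₂) ⊕ X` essentially contains both — then:
(i) the hotter-than relations induced on `X` by the two conjunctions coincide;
(ii) if for `j = 1, 2` every Clausius–Duhem temperature scale of `PCj` is a positive
multiple of a fixed `T*_j`, then the restrictions of `T*_1` and `T*_2` to `X`
differ by a positive multiple. -/
theorem thermometer_consistency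
    {Θ₁ Θ₂ X : Type*}
    [TopologicalSpace Θ₁] [CompactSpace Θ₁] [T2Space Θ₁]
    [TopologicalSpace Θ₂] [CompactSpace Θ₂] [T2Space Θ₂]
    [TopologicalSpace X] [CompactSpace X] [T2Space X]
    (P : Set (VSp X)) (hP : IsKelvinPlanck P)
    (PΘ1 : Set (VSp Θ₁)) (hPΘ1 : IsKelvinPlanck PΘ1)
    (hord1 : TotallyOrderedHotness PΘ1)
    (PΘ2 : Set (VSp Θ₂)) (hPΘ2 : IsKelvinPlanck PΘ2)
    (hord2 : TotallyOrderedHotness PΘ2)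
    (PC1 : Set (VSp (Θ₁ ⊕ X))) (hTC1 : IsThermometricConjunction PΘ1 P PC1)
    (PC2 : Set (VSp (Θ₂ ⊕ X))) (hTC2 : IsThermometricConjunction PΘ2 P PC2)
    (hcompat : ∃ PC3 : Set (VSp ((Θ₁ ⊕ Θ₂) ⊕ X)), IsKelvinPlanck PC3 ∧
      EssCont (emb₁ Θ₁ Θ₂ X) PC1 PC3 ∧ EssCont (emb₂ Θ₁ Θ₂ X) PC2 PC3) :
    (∀ a b : X, HotterState PC1 (Sum.inr a) (Sum.inr b) ↔
      HotterState PC2 (Sum.inr a) (Sum.inr b)) ∧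
    (∀ (T₁ : C(Θ₁ ⊕ X, ℝ)) (T₂ : C(Θ₂ ⊕ X, ℝ)),
      IsCDTemp PC1 T₁ → (∀ T : C(Θ₁ ⊕ X, ℝ), IsCDTemp PC1 T →
        ∃ α : ℝ, 0 < α ∧ T = α • T₁) →
      IsCDTemp PC2 T₂ → (∀ T : C(Θ₂ ⊕ X, ℝ), IsCDTemp PC2 T →
        ∃ α : ℝ, 0 < α ∧ T = α • T₂) →
      ∃ α : ℝ, 0 < α ∧ ∀ σ : X, T₂ (Sum.inr σ) = α * T₁ (Sum.inr σ)) := by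
  
  classical
  obtain ⟨PC3, hKP3, hE1, hE2⟩ := hcompat
  constructor
  · intro a b
    constructor
    · intro h1
      exact ThermoAux.hotter_transfer hPΘ2.1 hord2 hTC1.1.1 hTC2.1 hTC2.2.1 hTC2.2.2
        hKP3 (j₁ := emb₁ Θ₁ Θ₂ X) (j₂ := emb₂ Θ₁ Θ₂ X) (e := Sum.inr)
        (fun _ => rfl) hE1 hE2 ThermoAux.ext_embL ThermoAux.ext_embR h1
    · intro h2
      exact ThermoAux.hotter_transfer hPΘ1.1 hord1 hTC2.1.1 hTC1.1 hTC1.2.1 hTC1.2.2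
        hKP3 (j₁ := emb₂ Θ₁ Θ₂ X) (j₂ := emb₁ Θ₁ Θ₂ X) (e := Sum.inr)
        (fun _ => rfl) hE2 hE1 ThermoAux.ext_embR ThermoAux.ext_embL h2
  · intro T₁ T₂ _hT₁cd hT₁uniq _hT₂cd hT₂uniq
    obtain ⟨η, β, hβpos, hCD⟩ := ThermoAux.kp_exists_cd hKP3
    have hcd1 := ThermoAux.cd_temp_of_compat hE1 hβpos hCD
    have hcd2 := ThermoAux.cd_temp_of_compat hE2 hβpos hCD
    obtain ⟨α₁, hα₁, hT1eq⟩ := hT₁uniq _ hcd1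
    obtain ⟨α₂, hα₂, hT2eq⟩ := hT₂uniq _ hcd2
    refine ⟨α₁ / α₂, div_pos hα₁ hα₂, ?_⟩
    intro σ
    have h1 : (β ((emb₁ Θ₁ Θ₂ X) (Sum.inr σ)))⁻¹ = α₁ * T₁ (Sum.inr σ) := by
      have h := ContinuousMap.congr_fun hT1eq (Sum.inr σ)
      simpa using h
    have h2 : (β ((emb₂ Θ₁ Θ₂ X) (Sum.inr σ)))⁻¹ = α₂ * T₂ (Sum.inr σ) := by
      have h := ContinuousMap.congr_fun hT2eq (Sum.inr σ)
      simpa using h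
    have h12 : α₁ * T₁ (Sum.inr σ) = α₂ * T₂ (Sum.inr σ) := by
      rw [← h1, ← h2]
      rfl
    rw [div_mul_eq_mul_div, eq_div_iff (ne_of_gt hα₂)]
    linarith
end

section
/- For any Kelvin–Planck theory (Σ,P), the set of Clausius–Duhem temperature scales is dense (in the sup-norm topology of C(Σ,ℝ)) in the set of strong Clausius temperature scales, i.e., the set of continuous strictly positive T : Σ → ℝ satisfying ∫_Σ (1/T) dq ≤ 0 for every q ∈ M(Σ) with (0,q) ∈ \hat{P}. -/
open Set

section Aux

open Filter Topology

/-- Every continuous linear functional on a weak-star dual is evaluation at a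
point of the predual. -/
lemma weakDual_dual_eval {E : Type*} [NormedAddCommGroup E] [NormedSpace ℝ E]
    (F : WeakDual ℝ E →L[ℝ] ℝ) : ∃ e : E, ∀ μ : WeakDual ℝ E, F μ = μ e := by
  classical
  have hnb : F ⁻¹' Metric.ball 0 1 ∈ 𝓝 (0 : WeakDual ℝ E) := by
    have h1 : Metric.ball (0 : ℝ) 1 ∈ 𝓝 (F 0) := by
      rw [map_zero]; exact Metric.ball_mem_nhds _ one_pos
    exact F.continuous.continuousAt.preimage_mem_nhds h1
  obtain ⟨U, hU, hUsub⟩ :=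
    ((LinearMap.hasBasis_weakBilin (topDualPairing ℝ E)).mem_iff).1 hnb
  obtain ⟨s, r, hr, rfl⟩ := (SeminormFamily.basisSets_iff _).1 hU
  set L : s → (WeakDual ℝ E) →ₗ[ℝ] ℝ := fun i =>
    { toFun := fun μ => μ (i : E), map_add' := fun _ _ => rfl,
      map_smul' := fun _ _ => rfl } with hL
  have hker : ⨅ i, LinearMap.ker (L i) ≤
      LinearMap.ker (F : WeakDual ℝ E →ₗ[ℝ] ℝ) := by
    intro μ hμ
    have hzero : ∀ i ∈ s, μ i = 0 := fun i hi =>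
      (Submodule.mem_iInf _).1 hμ ⟨i, hi⟩
    have key : ∀ t : ℝ, 0 < t → t * |F μ| < 1 := by
      intro t ht
      have hmem : (t • μ) ∈
          ((s.sup ((topDualPairing ℝ E).toSeminormFamily)).ball 0 r) := by
        refine (Seminorm.mem_ball_zero _).2 ?_
        refine Seminorm.finset_sup_apply_lt hr fun i hi => ?_
        show ‖t * μ i‖ < r
        rw [hzero i hi, mul_zero, norm_zero]
        exact hr
      have h2 := hUsub hmem
      change F (t • μ) ∈ Metric.ball (0 : ℝ) 1 at h2
      simp only [Set.mem_preimage, Metric.mem_ball, Real.dist_eq, sub_zero] at h2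
      have h3 : F (t • μ) = t * F μ := by rw [map_smul]; rfl
      rw [h3, abs_mul, abs_of_pos ht] at h2
      exact h2
    have habs : |F μ| = 0 := by
      by_contra hne
      have hpos : 0 < |F μ| := lt_of_le_of_ne (abs_nonneg _) (Ne.symm hne)
      have h2 := key (2 / |F μ|) (by positivity)
      rw [div_mul_cancel₀ _ (ne_of_gt hpos)] at h2
      linarith
    exact LinearMap.mem_ker.2 (abs_eq_zero.1 habs)
  have hspan := mem_span_of_iInf_ker_le_ker (L := L)
    (K := (F : WeakDual ℝ E →ₗ[ℝ] ℝ)) hker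
  obtain ⟨c, hc⟩ := (Submodule.mem_span_range_iff_exists_fun ℝ).1 hspan
  refine ⟨∑ i, c i • (i : E), fun μ => ?_⟩
  have h4 := LinearMap.congr_fun hc μ
  simp only [LinearMap.coe_sum, Finset.sum_apply, LinearMap.smul_apply,
    smul_eq_mul, ContinuousLinearMap.coe_coe] at h4
  rw [← h4, map_sum]
  refine Finset.sum_congr rfl fun i _ => ?_
  rw [map_smul]
  rfl

instance weakDual_locallyConvex {E : Type*} [NormedAddCommGroup E] [NormedSpace ℝ E] :
    LocallyConvexSpace ℝ (WeakDual ℝ E) :=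
  inferInstanceAs (LocallyConvexSpace ℝ (WeakBilin (topDualPairing ℝ E)))

end Aux

/-- **Theorem.** For any Kelvin–Planck theory `(X, P)`, the set of Clausius–Duhem
temperature scales is dense (in the sup-norm topology of `C(X, ℝ)`) in the set of
strong Clausius temperature scales, i.e. of the continuous strictly positive `T`
with `∫ (1/T) dq ≤ 0` for every `q ∈ M(X)` with `(0, q) ∈ \hat P`. -/
theorem cd_scales_dense_in_strong_clausius_scales
    {X : Type*} [TopologicalSpace X] [CompactSpace X] [T2Space X]
    (P : Set (VSp X)) (hP : IsKelvinPlanck P) :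
    {T : C(X, ℝ) | (∀ x, 0 < T x) ∧
        ∀ q : Meas X, ((0 : Meas X), q) ∈ hatP P →
          ∀ β : C(X, ℝ), (∀ x, β x = (T x)⁻¹) → q β ≤ 0} ⊆
      closure {T : C(X, ℝ) | IsCDTemp P T} := by
  classical
  intro T hT
  obtain ⟨hTpos, hTstrong⟩ := hT
  set β₀ : C(X, ℝ) := ⟨fun x => (T x)⁻¹, T.continuous.inv₀ fun x => (hTpos x).ne'⟩
    with hβ₀def
  set D : Set C(X, ℝ) := {g | ∃ η : C(X, ℝ), ∀ p ∈ hatP P, p.2 g ≤ p.1 η} with hDdef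
  have hzeroD : (0 : C(X, ℝ)) ∈ D := ⟨0, fun p _ => by simp⟩
  have hDconv : Convex ℝ D := by
    rintro g₁ ⟨η₁, h₁⟩ g₂ ⟨η₂, h₂⟩ a b ha hb hab
    refine ⟨a • η₁ + b • η₂, fun p hp => ?_⟩
    have e1 : p.2 (a • g₁ + b • g₂) = a * p.2 g₁ + b * p.2 g₂ := by
      rw [map_add, map_smul, map_smul]; rfl
    have e2 : p.1 (a • η₁ + b • η₂) = a * p.1 η₁ + b * p.1 η₂ := by
      rw [map_add, map_smul, map_smul]; rfl
    rw [e1, e2]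
    exact add_le_add (mul_le_mul_of_nonneg_left (h₁ p hp) ha)
      (mul_le_mul_of_nonneg_left (h₂ p hp) hb)
  have hDscale : ∀ g ∈ D, ∀ t : ℝ, 0 ≤ t → t • g ∈ D := by
    rintro g ⟨η, hη⟩ t ht
    refine ⟨t • η, fun p hp => ?_⟩
    have e1 : p.2 (t • g) = t * p.2 g := by rw [map_smul]; rfl
    have e2 : p.1 (t • η) = t * p.1 η := by rw [map_smul]; rfl
    rw [e1, e2]
    exact mul_le_mul_of_nonneg_left (hη p hp) ht
  -- Key step: β₀ lies in the closure of D.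
  have hclos : β₀ ∈ closure D := by
    rcases P.eq_empty_or_nonempty with hPe | ⟨p₀, hp₀⟩
    · refine subset_closure ⟨0, fun p hp => ?_⟩
      have hemp : hatP P = ∅ := by
        simp [hatP, coneOf, hPe]
      rw [hemp] at hp
      exact absurd hp (Set.notMem_empty p)
    · have h0hat : (0 : VSp X) ∈ hatP P :=
        subset_closure ⟨0, le_refl 0, p₀, hp₀, (zero_smul ℝ p₀).symm⟩
      by_contra hc
      obtain ⟨f, u, hfD, hfβ⟩ := geometric_hahn_banach_closed_point
        hDconv.closure isClosed_closure hc
      have hu0 : 0 < u := by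
        have := hfD 0 (subset_closure hzeroD)
        simpa using this
      have hfle : ∀ g ∈ D, f g ≤ 0 := by
        intro g hg
        by_contra hpos
        push_neg at hpos
        have ht : (0 : ℝ) ≤ (u + 1) / f g := by positivity
        have h1 := hfD _ (subset_closure (hDscale g hg _ ht))
        rw [map_smul, smul_eq_mul, div_mul_cancel₀ _ (ne_of_gt hpos)] at h1
        linarith
      set μ : Meas X := f with hμdef
      have hμP : (((0 : Meas X), μ) : VSp X) ∈ hatP P := by
        by_contra hnot
        obtain ⟨G, v, hGlt, hGμ⟩ := geometric_hahn_banach_closed_point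
          hP.1.2 isClosed_closure hnot
        have hv0 : 0 < v := by
          have := hGlt 0 h0hat
          simpa using this
        have hsmulhat : ∀ t : ℝ, 0 ≤ t → ∀ a ∈ hatP P, t • a ∈ hatP P := by
          intro t ht a ha
          have hmap : (fun y : VSp X => t • y) '' coneOf P ⊆ coneOf P := by
            rintro _ ⟨y, ⟨c, hc0, p, hp, rfl⟩, rfl⟩
            exact ⟨t * c, mul_nonneg ht hc0, p, hp, smul_smul t c p⟩
          have hcont : Continuous fun y : VSp X => t • y := continuous_const_smul t
          have h1 : t • a ∈ (fun y : VSp X => t • y) '' closure (coneOf P) :=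
            ⟨a, ha, rfl⟩
          exact closure_mono hmap (image_closure_subset_closure_image hcont h1)
        have hGle : ∀ a ∈ hatP P, G a ≤ 0 := by
          intro a ha
          by_contra hpos
          push_neg at hpos
          have ht : (0 : ℝ) ≤ (v + 1) / G a := by positivity
          have h1 := hGlt _ (hsmulhat _ ht a ha)
          rw [map_smul, smul_eq_mul, div_mul_cancel₀ _ (ne_of_gt hpos)] at h1
          linarith
        obtain ⟨η₁, hη₁⟩ := weakDual_dual_eval
          (G.comp (ContinuousLinearMap.inl ℝ (Meas X) (Meas X)))
        obtain ⟨g₁, hg₁⟩ := weakDual_dual_eval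
          (G.comp (ContinuousLinearMap.inr ℝ (Meas X) (Meas X)))
        have hdec : ∀ p : VSp X, G p = p.1 η₁ + p.2 g₁ := by
          rintro ⟨pa, pb⟩
          show G (pa, pb) = pa η₁ + pb g₁
          have hsplit : ((pa, pb) : VSp X) = (pa, 0) + (0, pb) := by
            ext <;> simp
          rw [hsplit, map_add]
          have ea : G ((pa, 0) : VSp X) = pa η₁ := hη₁ pa
          have eb : G (((0 : Meas X), pb) : VSp X) = pb g₁ := hg₁ pb
          rw [ea, eb]
        have hg₁D : g₁ ∈ D := by
          refine ⟨-η₁, fun p hp => ?_⟩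
          have h1 := hGle p hp
          rw [hdec p] at h1
          have h2 : p.1 (-η₁) = -(p.1 η₁) := map_neg _ _
          rw [h2]
          linarith
        have h1 := hfle g₁ hg₁D
        have h2 : G (((0 : Meas X), μ) : VSp X) = μ g₁ := by
          rw [hdec]
          show (0 : Meas X) η₁ + μ g₁ = μ g₁
          rw [show (0 : Meas X) η₁ = 0 from rfl, zero_add]
        rw [h2] at hGμ
        have h3 : μ g₁ = f g₁ := rfl
        linarith
      have hb := hTstrong μ hμP β₀ fun x => rfl
      have h4 : μ β₀ = f β₀ := rfl
      linarith
  -- From closure membership, produce nearby Clausius–Duhem scales.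
  rcases isEmpty_or_nonempty X with hX | hX
  · refine subset_closure ⟨0, hTpos, fun β hβ p hp => ?_⟩
    have hβ0 : β = 0 := ContinuousMap.ext fun x => (IsEmpty.false x).elim
    rw [hβ0]
    simp
  · obtain ⟨x₁, -, hx₁⟩ := isCompact_univ.exists_isMaxOn Set.univ_nonempty
      T.continuous.continuousOn
    set M := T x₁ with hMdef
    have hM0 : 0 < M := hTpos x₁
    have hTle : ∀ x, T x ≤ M := fun x => hx₁ (Set.mem_univ x)
    rw [Metric.mem_closure_iff]
    intro ε hε
    set δ : ℝ := min ((2 * M)⁻¹) (ε / (4 * M ^ 2)) with hδdef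
    have hδ0 : 0 < δ := lt_min (by positivity) (by positivity)
    obtain ⟨g, hgD, hgdist⟩ := Metric.mem_closure_iff.1 hclos δ hδ0
    have hgpt : ∀ x, |g x - (T x)⁻¹| < δ := by
      intro x
      have h1 := (ContinuousMap.dist_lt_iff hδ0).1 hgdist x
      rw [Real.dist_eq] at h1
      have h2 : β₀ x = (T x)⁻¹ := rfl
      rw [abs_sub_comm]
      rw [h2] at h1
      exact h1
    have hβ₀lb : ∀ x, (M : ℝ)⁻¹ ≤ (T x)⁻¹ := fun x =>
      inv_anti₀ (hTpos x) (hTle x)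
    have h2M : (2 * M)⁻¹ = M⁻¹ / 2 := by
      field_simp
    have hδle1 : δ ≤ (2 * M)⁻¹ := min_le_left _ _
    have hδle2 : δ ≤ ε / (4 * M ^ 2) := min_le_right _ _
    have hglb : ∀ x, (2 * M)⁻¹ < g x := by
      intro x
      have h1 := abs_lt.1 (hgpt x)
      have h2 := hβ₀lb x
      linarith [h1.1, h2M]
    have hgpos : ∀ x, 0 < g x := fun x => lt_trans (by positivity) (hglb x)
    set T' : C(X, ℝ) := ⟨fun x => (g x)⁻¹, g.continuous.inv₀ fun x => (hgpos x).ne'⟩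
      with hT'def
    obtain ⟨η, hη⟩ := hgD
    refine ⟨T', ⟨η, fun x => inv_pos.2 (hgpos x), fun β hβ p hp => ?_⟩, ?_⟩
    · have hβg : β = g := ContinuousMap.ext fun x => by
        rw [hβ x]
        show ((g x)⁻¹)⁻¹ = g x
        rw [inv_inv]
      rw [hβg]
      exact hη p (subset_closure ⟨1, zero_le_one, p, hp, (one_smul ℝ p).symm⟩)
    · rw [ContinuousMap.dist_lt_iff hε]
      intro x
      rw [Real.dist_eq]
      have ha0 : 0 < T x := hTpos x
      have hb0 : 0 < g x := hgpos x
      have hT'x : T' x = (g x)⁻¹ := rfl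
      rw [hT'x]
      have heq : T x - (g x)⁻¹ = (g x - (T x)⁻¹) * T x * (g x)⁻¹ := by
        field_simp
      rw [heq, abs_mul, abs_mul, abs_of_pos ha0, abs_of_pos (inv_pos.2 hb0)]
      have hbinv : (g x)⁻¹ < 2 * M := by
        have h1 := inv_strictAnti₀ (show (0:ℝ) < (2 * M)⁻¹ by positivity) (hglb x)
        rwa [inv_inv] at h1
      have h4 : |g x - (T x)⁻¹| * T x ≤ δ * M :=
        mul_le_mul (le_of_lt (hgpt x)) (hTle x) (le_of_lt ha0) (le_of_lt hδ0)
      have h5 : |g x - (T x)⁻¹| * T x * (g x)⁻¹ ≤ δ * M * (2 * M) :=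
        mul_le_mul h4 (le_of_lt hbinv) (le_of_lt (inv_pos.2 hb0)) (by positivity)
      have h6 : δ * M * (2 * M) ≤ ε / 2 := by
        have h7 : δ * (M * (2 * M)) ≤ (ε / (4 * M ^ 2)) * (M * (2 * M)) :=
          mul_le_mul_of_nonneg_right hδle2 (by positivity)
        have h8 : (ε / (4 * M ^ 2)) * (M * (2 * M)) = ε / 2 := by
          field_simp
          ring
        calc δ * M * (2 * M) = δ * (M * (2 * M)) := by ring
          _ ≤ (ε / (4 * M ^ 2)) * (M * (2 * M)) := h7
          _ = ε / 2 := h8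
      linarith
end
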